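/- Let G = ⟨H, t | t a t⁻¹ = φ(a) for a ∈ A⟩ be an HNN extension of H with associated subgroups A, B ≤ H and isomorphism φ : A → B, and let η : Σ → G be a finite symmetric generating set of G. Then the set of words over Σ representing an element of the canonical image of H is strongly negligible if and only if both [H : A] ≥ 2 and [H : B] ≥ 2. -/

import Mathlib

universe u

open Monoid

/-- The number of words of length `n` over `α` lying in `L`. -/
noncomputable def wordCount {α : Type*} (L : Set (List α)) (n : ℕ) : ℕ :=
  Nat.card {w : List α // w ∈ L ∧ w.length = n}

/-- A set of words over a finite alphabet is strongly negligible: the number of its words of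
length `n` is at most `C·ρⁿ·|Σ|ⁿ` for some constants `C > 0` and `0 < ρ < 1`. -/
def StronglyNegligible {α : Type*} [Fintype α] (L : Set (List α)) : Prop :=
  ∃ C ρ : ℝ, 0 < C ∧ 0 < ρ ∧ ρ < 1 ∧ ∀ n : ℕ,
    (wordCount L n : ℝ) ≤ C * ρ ^ n * (Fintype.card α : ℝ) ^ n

/-- A set of words is strongly generic if its complement is strongly negligible. -/
def StronglyGeneric {α : Type*} [Fintype α] (L : Set (List α)) : Prop :=
  StronglyNegligible Lᶜ

/-- `η : α → G` together with the involution `inv` is a symmetric generating set: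
`inv` is a fixed-point-free involution, `η (inv a) = (η a)⁻¹`, and the image of `η`
generates `G` as a group. -/
def IsSymmetricGen {α G : Type*} [Group G] (η : α → G) (inv : α → α) : Prop :=
  (∀ a, inv (inv a) = a) ∧ (∀ a, inv a ≠ a) ∧ (∀ a, η (inv a) = (η a)⁻¹) ∧
    Subgroup.closure (Set.range η) = ⊤

/-- The element of `G` represented by a word over `α`. -/
def evalWord {α G : Type*} [Monoid G] (η : α → G) (w : List α) : G :=
  (w.map η).prod

set_option linter.unusedSectionVars false
set_option maxHeartbeats 1000000

open scoped Classical

open Topology Filter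
namespace Stmt1Aux

variable {α : Type*}

def invRev (inv : α → α) (w : List α) : List α := (w.map inv).reverse

@[simp] lemma length_invRev (inv : α → α) (w : List α) : (invRev inv w).length = w.length := by
  simp [invRev]

lemma invRev_cons (inv : α → α) (a : α) (w : List α) :
    invRev inv (a :: w) = invRev inv w ++ [inv a] := by simp [invRev]

lemma invRev_invRev (inv : α → α) (hinv : ∀ a, inv (inv a) = a) (w : List α) :
    invRev inv (invRev inv w) = w := by
  simp only [invRev, List.map_reverse, List.reverse_reverse, List.map_map]
  have : inv ∘ inv = id := funext hinv
  simp [this]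

section eval
variable {G : Type*} [Group G] (η : α → G)

@[simp] lemma evalWord_nil : evalWord η [] = 1 := rfl

@[simp] lemma evalWord_cons (a : α) (w : List α) :
    evalWord η (a :: w) = η a * evalWord η w := by simp [evalWord]

@[simp] lemma evalWord_append (w₁ w₂ : List α) :
    evalWord η (w₁ ++ w₂) = evalWord η w₁ * evalWord η w₂ := by simp [evalWord]

lemma evalWord_invRev (inv : α → α) (hinv : ∀ a, η (inv a) = (η a)⁻¹) (w : List α) :
    evalWord η (invRev inv w) = (evalWord η w)⁻¹ := by
  induction w with
  | nil => simp [invRev]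
  | cons a w ih => rw [invRev_cons, evalWord_append, ih, evalWord_cons]; simp [hinv]

lemma evalWord_join_replicate (m : ℕ) (w : List α) :
    evalWord η (List.flatten (List.replicate m w)) = (evalWord η w) ^ m := by
  induction m with
  | zero => simp
  | succ m ih => simp [List.replicate_succ, ih, pow_succ']

lemma exists_word (inv : α → α) (hinv : ∀ a, η (inv a) = (η a)⁻¹)
    (hgen : Subgroup.closure (Set.range η) = ⊤) (g : G) :
    ∃ w : List α, evalWord η w = g := by
  have hg : g ∈ Subgroup.closure (Set.range η) := hgen ▸ Subgroup.mem_top g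
  induction hg using Subgroup.closure_induction with
  | mem x hx => obtain ⟨a, rfl⟩ := hx; exact ⟨[a], by simp⟩
  | one => exact ⟨[], rfl⟩
  | mul x y _ _ hx hy =>
      obtain ⟨w₁, rfl⟩ := hx; obtain ⟨w₂, rfl⟩ := hy
      exact ⟨w₁ ++ w₂, by simp⟩
  | inv x _ hx =>
      obtain ⟨w, rfl⟩ := hx
      exact ⟨invRev inv w, evalWord_invRev η inv hinv w⟩

end eval

variable [Fintype α] [DecidableEq α]

def wordFinset (α : Type*) [Fintype α] [DecidableEq α] (n : ℕ) : Finset (List α) :=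
  (Finset.univ : Finset (Fin n → α)).image List.ofFn

lemma mem_wordFinset {n : ℕ} {w : List α} : w ∈ wordFinset α n ↔ w.length = n := by
  constructor
  · rintro hw
    simp only [wordFinset, Finset.mem_image] at hw
    obtain ⟨f, _, rfl⟩ := hw
    simp
  · rintro rfl
    simp only [wordFinset, Finset.mem_image]
    exact ⟨w.get, Finset.mem_univ _, List.ofFn_get w⟩

lemma card_wordFinset (n : ℕ) : (wordFinset α n).card = Fintype.card α ^ n := by
  rw [wordFinset, Finset.card_image_of_injective _ List.ofFn_injective, Finset.card_univ]
  simp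

lemma wordCount_eq (L : Set (List α)) (n : ℕ) [DecidablePred (· ∈ L)] :
    wordCount L n = ((wordFinset α n).filter (· ∈ L)).card := by
  have e : {w : List α // w ∈ L ∧ w.length = n} ≃
      {w : List α // w ∈ (wordFinset α n).filter (· ∈ L)} :=
    Equiv.subtypeEquivRight (fun w => by simp [mem_wordFinset, and_comm])
  rw [wordCount, Nat.card_congr e, Nat.card_eq_fintype_card, Fintype.card_coe]

lemma wordCount_le (L : Set (List α)) (n : ℕ) :
    wordCount L n ≤ Fintype.card α ^ n := by
  classical
  rw [wordCount_eq]
  exact le_trans (Finset.card_filter_le _ _) (le_of_eq (card_wordFinset n))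

end Stmt1Aux
namespace Stmt1Aux

section sums
variable {α : Type*} (s : α → ℤ)

/-- the weight of a word -/
def σw (s : α → ℤ) (w : List α) : ℤ := (w.map s).sum

@[simp] lemma σw_nil : σw s [] = 0 := rfl
@[simp] lemma σw_cons (a : α) (w : List α) : σw s (a :: w) = s a + σw s w := by simp [σw]
@[simp] lemma σw_append (w₁ w₂ : List α) : σw s (w₁ ++ w₂) = σw s w₁ + σw s w₂ := by simp [σw]

lemma abs_σw_le {M : ℕ} (hM : ∀ a, |s a| ≤ (M : ℤ)) (w : List α) :
    |σw s w| ≤ (M : ℤ) * w.length := by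
  induction w with
  | nil => simp
  | cons a w ih =>
      simp only [σw_cons, List.length_cons]
      calc |s a + σw s w| ≤ |s a| + |σw s w| := abs_add_le _ _
        _ ≤ (M : ℤ) + (M : ℤ) * w.length := add_le_add (hM a) ih
        _ = (M : ℤ) * ((w.length : ℤ) + 1) := by ring
        _ = (M : ℤ) * (((w.length : ℕ) + 1 : ℕ) : ℤ) := by push_cast; ring

lemma σw_take_add (w : List α) (j i : ℕ) :
    σw s (w.take (j + i)) = σw s (w.take j) + σw s ((w.drop j).take i) := by
  rw [← σw_append, ← List.take_add]

lemma σw_take_drop (w : List α) (j : ℕ) :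
    σw s (w.take j) + σw s (w.drop j) = σw s w := by
  rw [← σw_append, List.take_append_drop]

lemma σw_invRev (inv : α → α) (hsinv : ∀ a, s (inv a) = - s a) (w : List α) :
    σw s (invRev inv w) = - σw s w := by
  induction w with
  | nil => simp [invRev]
  | cons a w ih => rw [invRev_cons, σw_append, ih, σw_cons]; simp [hsinv]

end sums

section rotation

variable {α : Type*} (s : α → ℤ)

/-- If a word has zero weight, some rotation of it has all prefix weights nonnegative. -/
lemma exists_rotation (w : List α) (hw : σw s w = 0) :
    ∃ j ≤ w.length, (∀ i, 0 ≤ σw s ((w.drop j ++ w.take j).take i)) := by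
  obtain ⟨j, hj, hmin⟩ := Finset.exists_min_image (Finset.range (w.length + 1))
      (fun j => σw s (w.take j)) ⟨0, by simp⟩
  rw [Finset.mem_range, Nat.lt_succ_iff] at hj
  refine ⟨j, hj, fun i => ?_⟩
  set m := w.length with hm
  by_cases him : m ≤ i
  · have h1 : (w.drop j ++ w.take j).length = m := by
      simp [hm]; omega
    rw [List.take_of_length_le (by omega)]
    have : σw s (w.drop j ++ w.take j) = σw s w := by
      rw [σw_append, add_comm, σw_take_drop]
    omega
  · push_neg at him
    by_cases hi : i ≤ m - j
    · have hdj : (w.drop j).length = m - j := by simp [hm]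
      rw [List.take_append_of_le_length (by omega)]
      have h2 : σw s (w.take (j + i)) = σw s (w.take j) + σw s ((w.drop j).take i) :=
        σw_take_add s w j i
      have h3 : σw s (w.take j) ≤ σw s (w.take (j + i)) :=
        hmin _ (by rw [Finset.mem_range]; omega)
      omega
    · push_neg at hi
      have hdj : (w.drop j).length = m - j := by simp [hm]
      rw [List.take_append, List.take_of_length_le (by omega), hdj]
      rw [List.take_take]
      have h4 : min (i - (m - j)) j = i - (m - j) := by omega
      rw [h4, σw_append]
      have h5 : σw s (w.take (i - (m - j))) ≥ σw s (w.take j) :=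
        hmin _ (by rw [Finset.mem_range]; omega)
      have h6 : σw s (w.drop j) = - σw s (w.take j) := by
        have := σw_take_drop s w j; omega
      omega

end rotation

end Stmt1Aux
namespace Stmt1Aux

section counting
variable {α : Type*} [Fintype α] [DecidableEq α] (s : α → ℤ) (inv : α → α)

/-- Step A: Cauchy-Schwarz counting of zero-weight words. -/
lemma count_zero_sum (M : ℕ) (hM : ∀ a, |s a| ≤ (M : ℤ))
    (hsinv : ∀ a, s (inv a) = - s a) (hinv2 : ∀ a, inv (inv a) = a) (n : ℕ) :
    Fintype.card α ^ n * Fintype.card α ^ n ≤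
      (2 * M * n + 1) *
        ((wordFinset α (n + n)).filter (fun w => σw s w = 0)).card := by
  classical
  set I : Finset ℤ := Finset.Icc (-((M : ℤ) * n)) ((M : ℤ) * n) with hI
  have hfib : ∀ w ∈ wordFinset α n, σw s w ∈ I := by
    intro w hw
    rw [hI, Finset.mem_Icc]
    have := abs_σw_le s hM w
    rw [mem_wordFinset.1 hw] at this
    rw [abs_le] at this
    exact this
  have hcardI : I.card = 2 * M * n + 1 := by
    rw [hI, Int.card_Icc]
    have : (M : ℤ) * n + 1 - -((M : ℤ) * n) = ((2 * M * n + 1 : ℕ) : ℤ) := by push_cast; ring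
    rw [this, Int.toNat_natCast]
  set N : ℤ → ℕ := fun x => ((wordFinset α n).filter (fun w => σw s w = x)).card with hN
  have h1 : (wordFinset α n).card = ∑ x ∈ I, N x :=
    Finset.card_eq_sum_card_fiberwise hfib
  -- pairs with equal weights
  set Pairs : Finset (List α × List α) :=
    ((wordFinset α n) ×ˢ (wordFinset α n)).filter (fun p => σw s p.1 = σw s p.2) with hPairs
  have h2 : ∑ x ∈ I, N x * N x = Pairs.card := by
    rw [Finset.card_eq_sum_card_fiberwise (f := fun p => σw s p.1) (t := I)
      (fun p hp => by
        simp only [Finset.mem_coe] at hp ⊢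
        rw [hPairs, Finset.mem_filter, Finset.mem_product] at hp
        exact hfib _ hp.1.1)]
    refine Finset.sum_congr rfl (fun x _ => ?_)
    have : Pairs.filter (fun p => σw s p.1 = x) =
        ((wordFinset α n).filter (fun w => σw s w = x)) ×ˢ
          ((wordFinset α n).filter (fun w => σw s w = x)) := by
      ext p
      simp only [hPairs, Finset.mem_filter, Finset.mem_product]
      constructor
      · rintro ⟨⟨⟨h1, h2⟩, h3⟩, h4⟩
        exact ⟨⟨h1, h4⟩, ⟨h2, by rw [← h3]; exact h4⟩⟩
      · rintro ⟨⟨h1, h4⟩, ⟨h2, h5⟩⟩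
        exact ⟨⟨⟨h1, h2⟩, by rw [h4, h5]⟩, h4⟩
    rw [this, Finset.card_product]
  have h3 : Pairs.card ≤
      ((wordFinset α (n + n)).filter (fun w => σw s w = 0)).card := by
    apply Finset.card_le_card_of_injOn (fun p => p.1 ++ invRev inv p.2)
    · intro p hp
      simp only [Finset.mem_coe] at hp ⊢
      rw [hPairs, Finset.mem_filter, Finset.mem_product] at hp
      rw [Finset.mem_filter, mem_wordFinset]
      refine ⟨?_, ?_⟩
      · rw [List.length_append, length_invRev, mem_wordFinset.1 hp.1.1,
          mem_wordFinset.1 hp.1.2]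
      · rw [σw_append, σw_invRev s inv hsinv, hp.2]
        ring
    · intro p hp q hq hpq
      rw [Finset.mem_coe, hPairs, Finset.mem_filter, Finset.mem_product] at hp hq
      have hl1 : p.1.length = n := mem_wordFinset.1 hp.1.1
      have hl2 : q.1.length = n := mem_wordFinset.1 hq.1.1
      obtain ⟨e1, e2⟩ := List.append_inj hpq (hl1.trans hl2.symm)
      have e3 : p.2 = q.2 := by
        have := congrArg (invRev inv) e2
        rwa [invRev_invRev inv hinv2, invRev_invRev inv hinv2] at this
      exact Prod.ext e1 e3
  calc Fintype.card α ^ n * Fintype.card α ^ n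
      = (∑ x ∈ I, N x) * (∑ x ∈ I, N x) := by rw [← h1, card_wordFinset]
    _ ≤ I.card * ∑ x ∈ I, N x * N x := by
        have h := sq_sum_le_card_mul_sum_sq (s := I) (f := fun x => (N x : ℤ))
        simp only [sq] at h
        exact_mod_cast h
    _ = (2 * M * n + 1) * Pairs.card := by rw [hcardI, h2]
    _ ≤ _ := Nat.mul_le_mul_left _ h3

end counting
end Stmt1Aux
namespace Stmt1Aux

section rotcount
variable {α : Type*} [Fintype α] [DecidableEq α] (s : α → ℤ)

lemma count_rotation (m : ℕ) :
    ((wordFinset α m).filter (fun w => σw s w = 0)).card ≤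
      (m + 1) * ((wordFinset α m).filter
        (fun w => σw s w = 0 ∧ ∀ i, 0 ≤ σw s (w.take i))).card := by
  classical
  set NN := (wordFinset α m).filter
      (fun w => σw s w = 0 ∧ ∀ i, 0 ≤ σw s (w.take i)) with hNN
  have key : ((wordFinset α m).filter (fun w => σw s w = 0)).card ≤
      (NN ×ˢ Finset.range (m + 1)).card := by
    set j : List α → ℕ := fun w =>
      if h : σw s w = 0 then Classical.choose (exists_rotation s w h) else 0 with hj
    apply Finset.card_le_card_of_injOn (fun w => (w.drop (j w) ++ w.take (j w), j w))
    · intro w hw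
      simp only [Finset.mem_coe] at hw ⊢
      rw [Finset.mem_filter, mem_wordFinset] at hw
      obtain ⟨hlen, hz⟩ := hw
      have hspec := Classical.choose_spec (exists_rotation s w hz)
      have hjw : j w = Classical.choose (exists_rotation s w hz) := by
        rw [hj]; simp [hz]
      obtain ⟨hle, hpos⟩ := hspec
      rw [Finset.mem_product, Finset.mem_range]
      constructor
      · rw [hNN, Finset.mem_filter, mem_wordFinset]
        refine ⟨by simp [hjw]; omega, ?_, ?_⟩
        · rw [σw_append, add_comm, σw_take_drop, hz]
        · intro i; rw [hjw]; exact hpos i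
      · simp only [hjw]; omega
    · intro w₁ hw₁ w₂ hw₂ heq
      rw [Finset.mem_coe, Finset.mem_filter, mem_wordFinset] at hw₁ hw₂
      simp only [Prod.mk.injEq] at heq
      obtain ⟨hrot, hjeq⟩ := heq
      rw [hjeq] at hrot
      set jj := j w₂ with hjj
      have hj1 : j w₁ = jj := hjeq
      have hb1 : jj ≤ m := by
        by_contra hcon
        push_neg at hcon
        have h1 : (w₂.drop jj) = [] := by
          apply List.drop_eq_nil_of_le; omega
        have hspec := Classical.choose_spec (exists_rotation s w₂ hw₂.2)
        have : jj = Classical.choose (exists_rotation s w₂ hw₂.2) := by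
          rw [hjj, hj]; simp [hw₂.2]
        omega
      have hrec : ∀ w : List α, w.length = m → j w = jj →
          w = (w.drop jj ++ w.take jj).drop (m - jj) ++ (w.drop jj ++ w.take jj).take (m - jj) := by
        intro w hlen hjw
        have hld : (w.drop jj).length = m - jj := by simp [hlen]
        rw [List.take_left' hld, List.drop_left' hld, List.take_append_drop]
      calc w₁ = _ := hrec w₁ hw₁.1 hj1
        _ = _ := by rw [hrot]
        _ = w₂ := (hrec w₂ hw₂.1 rfl).symm
  calc _ ≤ (NN ×ˢ Finset.range (m + 1)).card := key
    _ = (m + 1) * NN.card := by rw [Finset.card_product, Finset.card_range, mul_comm]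

end rotcount
end Stmt1Aux
namespace Stmt1Aux

section abstract2
variable {α : Type*} [Fintype α] [DecidableEq α] {Γ : Type*} [Group Γ]

lemma length_join_replicate (m : ℕ) (w : List α) :
    (List.flatten (List.replicate m w)).length = m * w.length := by
  induction m with
  | zero => simp
  | succ m ih => simp [List.replicate_succ, ih]; ring

variable (η : α → Γ) (K : Subgroup Γ) (F : Γ → ℤ)

lemma F_one (hF : ∀ g g', F (g * g') = F g + F g') : F 1 = 0 := by
  have := hF 1 1
  simp at this
  omega

lemma F_inv (hF : ∀ g g', F (g * g') = F g + F g') (g : Γ) : F g⁻¹ = - F g := by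
  have h1 := hF g g⁻¹
  rw [mul_inv_cancel, F_one F hF] at h1
  omega

lemma F_eval (hF : ∀ g g', F (g * g') = F g + F g') (w : List α) :
    F (evalWord η w) = σw (fun a => F (η a)) w := by
  induction w with
  | nil => simpa using F_one F hF
  | cons a w ih => rw [evalWord_cons, hF, ih, σw_cons]

variable (τ : Γ)

/-- the key invariant propagation: words with nonnegative prefix weights conjugate into `K`. -/
lemma invariant_prop (m₀ : ℤ)
    (hm : ∀ (a : α) (n : ℤ), m₀ ≤ n → τ ^ n * η a * τ ^ (-(n + F (η a))) ∈ K) :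
    ∀ w : List α, ∀ n : ℤ, (∀ j, m₀ ≤ n + σw (fun a => F (η a)) (w.take j)) →
      τ ^ n * evalWord η w * τ ^ (-(n + σw (fun a => F (η a)) w)) ∈ K := by
  intro w
  induction w with
  | nil =>
      intro n _
      have : τ ^ n * evalWord η [] * τ ^ (-(n + σw (fun a => F (η a)) [])) = 1 := by
        simp only [evalWord_nil, σw_nil, add_zero, mul_one]; group
      rw [this]; exact one_mem K
  | cons a w ih =>
      intro n hpre
      have hn : m₀ ≤ n := by simpa using hpre 0
      have h1 : τ ^ n * η a * τ ^ (-(n + F (η a))) ∈ K := hm a n hn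
      have h2 : τ ^ (n + F (η a)) * evalWord η w *
          τ ^ (-(n + F (η a) + σw (fun a => F (η a)) w)) ∈ K := by
        apply ih
        intro j
        have := hpre (j + 1)
        simp only [List.take_succ_cons, σw_cons] at this
        omega
      have heq : τ ^ n * evalWord η (a :: w) *
            τ ^ (-(n + σw (fun a => F (η a)) (a :: w))) =
          (τ ^ n * η a * τ ^ (-(n + F (η a)))) *
            (τ ^ (n + F (η a)) * evalWord η w *
              τ ^ (-(n + F (η a) + σw (fun a => F (η a)) w))) := by
        rw [evalWord_cons, σw_cons]
        have e1 : (-(n + F (η a))) = -(n + F (η a)) := rfl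
        group
      rw [heq]
      exact mul_mem h1 h2

end abstract2
end Stmt1Aux
namespace Stmt1Aux

section abstract3
variable {α : Type*} [Fintype α] [DecidableEq α] {Γ : Type*} [Group Γ]

/-- Abstract criterion for non-negligibility of the set of words landing in a subgroup `K`:
there is an "exponent-sum" function `F`, and an element `τ` whose powers conjugate each
generator into `K` up to the correct power of `τ`. -/
lemma not_negligible [Nonempty α]
    (η : α → Γ) (inv : α → α) (hinv2 : ∀ a, inv (inv a) = a)
    (hinv : ∀ a, η (inv a) = (η a)⁻¹)
    (K : Subgroup Γ) (F : Γ → ℤ) (hF : ∀ g g', F (g * g') = F g + F g')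
    (τ : Γ)
    (hPa : ∀ a : α, ∃ m : ℤ, ∀ n : ℤ, m ≤ n → τ ^ n * η a * τ ^ (-(n + F (η a))) ∈ K)
    (wτ : List α) (hwτ : evalWord η wτ = τ) :
    ¬ StronglyNegligible {w : List α | evalWord η w ∈ K} := by
  classical
  rintro ⟨C, ρ, hC, hρ0, hρ1, hbound⟩
  set s : α → ℤ := fun a => F (η a) with hs
  set k := Fintype.card α with hk
  have hk1 : 1 ≤ k := Fintype.card_pos
  set M := Finset.univ.sup (fun a => (s a).natAbs) with hM
  have hMa : ∀ a, |s a| ≤ (M : ℤ) := by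
    intro a
    rw [Int.abs_eq_natAbs]
    exact_mod_cast Finset.le_sup (f := fun a => (s a).natAbs) (Finset.mem_univ a)
  have hsinv : ∀ a, s (inv a) = - s a := by
    intro a
    show F (η (inv a)) = - F (η a)
    rw [hinv a, F_inv F hF]
  set m₀ : ℕ := Finset.univ.sup (fun a => (Classical.choose (hPa a)).toNat) with hm₀
  have hm : ∀ (a : α) (n : ℤ), (m₀ : ℤ) ≤ n → τ ^ n * η a * τ ^ (-(n + F (η a))) ∈ K := by
    intro a n hn
    apply Classical.choose_spec (hPa a)
    calc Classical.choose (hPa a) ≤ ((Classical.choose (hPa a)).toNat : ℤ) :=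
          Int.self_le_toNat _
      _ ≤ (m₀ : ℤ) := by
          exact_mod_cast Finset.le_sup (f := fun a => (Classical.choose (hPa a)).toNat)
            (Finset.mem_univ a)
      _ ≤ n := hn
  set U := (List.replicate m₀ wτ).flatten with hU
  have hUeval : evalWord η U = τ ^ m₀ := by rw [hU, evalWord_join_replicate, hwτ]
  have hUlen : U.length = m₀ * wτ.length := length_join_replicate m₀ wτ
  set Ub := invRev inv U with hUb
  have hUbeval : evalWord η Ub = (τ ^ m₀)⁻¹ := by
    rw [hUb, evalWord_invRev η inv hinv, hUeval]
  set D := 2 * (m₀ * wτ.length) with hD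
  set L : Set (List α) := {w | evalWord η w ∈ K} with hL
  have stepC : ∀ n : ℕ,
      ((wordFinset α (n+n)).filter
        (fun w => σw s w = 0 ∧ ∀ i, 0 ≤ σw s (w.take i))).card ≤ wordCount L (n+n+D) := by
    intro n
    rw [wordCount_eq]
    apply Finset.card_le_card_of_injOn (fun w => U ++ (w ++ Ub))
    · intro w hw
      simp only [Finset.mem_coe] at hw ⊢
      rw [Finset.mem_filter, mem_wordFinset] at hw
      obtain ⟨hlen, hz, hpos⟩ := hw
      rw [Finset.mem_filter, mem_wordFinset]
      constructor
      · simp only [List.length_append, hUlen, hlen, hUb, length_invRev, hD]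
        ring
      · show evalWord η (U ++ (w ++ Ub)) ∈ K
        rw [evalWord_append, evalWord_append, hUeval, hUbeval]
        have h2 := invariant_prop η K F τ (m₀ : ℤ) hm w (m₀ : ℤ)
          (fun j => by have := hpos j; rw [hs] at this; omega)
        rw [hz, add_zero] at h2
        have heq : τ ^ m₀ * (evalWord η w * (τ ^ m₀)⁻¹) =
            τ ^ (m₀ : ℤ) * evalWord η w * τ ^ (-(m₀ : ℤ)) := by
          rw [zpow_natCast, zpow_neg, zpow_natCast]; group
        rw [heq]
        exact h2
    · intro w₁ hw₁ w₂ hw₂ heq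
      have h1 := List.append_cancel_left heq
      rw [Finset.mem_coe, Finset.mem_filter, mem_wordFinset] at hw₁ hw₂
      exact (List.append_inj h1 (by rw [hw₁.1, hw₂.1])).1
  have chain : ∀ n : ℕ,
      k ^ n * k ^ n ≤ (2*M*n+1) * ((n+n+1) * wordCount L (n+n+D)) := by
    intro n
    calc k ^ n * k ^ n
        ≤ (2*M*n+1) * ((wordFinset α (n+n)).filter (fun w => σw s w = 0)).card :=
          count_zero_sum s inv M hMa hsinv hinv2 n
      _ ≤ (2*M*n+1) * ((n+n+1) *
            ((wordFinset α (n+n)).filter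
              (fun w => σw s w = 0 ∧ ∀ i, 0 ≤ σw s (w.take i))).card) :=
          Nat.mul_le_mul_left _ (count_rotation s (n+n))
      _ ≤ _ := Nat.mul_le_mul_left _ (Nat.mul_le_mul_left _ (stepC n))
  -- pass to real numbers
  set E : ℝ := C * ρ ^ D * (k : ℝ) ^ D with hE
  have hkR : (1 : ℝ) ≤ (k : ℝ) := by exact_mod_cast hk1
  have key : ∀ n : ℕ, (1 : ℝ) ≤
      E * (((2*M*n+1) * (n+n+1) : ℕ) : ℝ) * (ρ ^ 2) ^ n := by
    intro n
    have h1 : ((k : ℝ) ^ n * (k : ℝ) ^ n) ≤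
        (((2*M*n+1) * ((n+n+1)) : ℕ) : ℝ) * (wordCount L (n+n+D) : ℝ) := by
      have := chain n
      have h' : (k ^ n * k ^ n : ℕ) ≤ ((2*M*n+1) * (n+n+1)) * wordCount L (n+n+D) := by
        calc k ^ n * k ^ n ≤ _ := this
          _ = ((2*M*n+1) * (n+n+1)) * wordCount L (n+n+D) := by ring
      exact_mod_cast h'
    have h2 : (wordCount L (n+n+D) : ℝ) ≤ C * ρ ^ (n+n+D) * (k : ℝ) ^ (n+n+D) :=
      hbound (n+n+D)
    have hP : (0 : ℝ) ≤ (((2*M*n+1) * (n+n+1) : ℕ) : ℝ) := by positivity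
    have h3 : ((k : ℝ) ^ n * (k : ℝ) ^ n) ≤
        (((2*M*n+1) * (n+n+1) : ℕ) : ℝ) * (C * ρ ^ (n+n+D) * (k : ℝ) ^ (n+n+D)) :=
      le_trans h1 (by exact mul_le_mul_of_nonneg_left h2 hP)
    have hsplit : (((2*M*n+1) * (n+n+1) : ℕ) : ℝ) * (C * ρ ^ (n+n+D) * (k : ℝ) ^ (n+n+D)) =
        ((k : ℝ) ^ n * (k : ℝ) ^ n) *
          (E * (((2*M*n+1) * (n+n+1) : ℕ) : ℝ) * (ρ ^ 2) ^ n) := by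
      rw [hE]
      rw [pow_add, pow_add, pow_add, pow_add]
      have : ((ρ ^ 2) ^ n : ℝ) = ρ ^ n * ρ ^ n := by
        rw [← pow_mul, two_mul, pow_add]
      rw [this]; ring
    rw [hsplit] at h3
    have hpos : (0 : ℝ) < (k : ℝ) ^ n * (k : ℝ) ^ n := by positivity
    nlinarith [h3, hpos]
  -- the RHS tends to zero
  have hr : ‖ρ ^ 2‖ < 1 := by
    rw [Real.norm_eq_abs, abs_of_nonneg (by positivity)]
    calc ρ ^ 2 < 1 ^ 2 := by nlinarith
      _ = 1 := one_pow 2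
  have t0 := (summable_pow_mul_geometric_of_norm_lt_one 0 hr).tendsto_atTop_zero
  have t1 := (summable_pow_mul_geometric_of_norm_lt_one 1 hr).tendsto_atTop_zero
  have t2 := (summable_pow_mul_geometric_of_norm_lt_one 2 hr).tendsto_atTop_zero
  have Tsum : Filter.Tendsto
      (fun n : ℕ => (E * (4*M)) * ((n:ℝ) ^ 2 * (ρ^2) ^ n) +
        ((E * (2*M + 2)) * ((n:ℝ) ^ 1 * (ρ^2) ^ n) + E * ((n:ℝ) ^ 0 * (ρ^2) ^ n)))
      Filter.atTop (𝓝 0) := by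
    have := ((t2.const_mul (E * (4*M))).add
      ((t1.const_mul (E * (2*M+2))).add (t0.const_mul E)))
    simpa using this
  have T : Filter.Tendsto
      (fun n : ℕ => E * (((2*M*n+1) * (n+n+1) : ℕ) : ℝ) * (ρ ^ 2) ^ n)
      Filter.atTop (𝓝 0) := by
    apply Tsum.congr
    intro n
    push_cast
    ring
  have hev := T.eventually_lt_const (by norm_num : (0:ℝ) < 1)
  obtain ⟨n, hn⟩ := hev.exists
  exact absurd (key n) (not_le.2 hn)

end abstract3
end Stmt1Aux
namespace Stmt1Aux

section Pprop
variable {Γ : Type*} [Group Γ]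

/-- the conjugation-stabilization property -/
def Pprop (K : Subgroup Γ) (F : Γ → ℤ) (τ : Γ) (g : Γ) : Prop :=
  ∃ m : ℤ, ∀ n : ℤ, m ≤ n → τ ^ n * g * τ ^ (-(n + F g)) ∈ K

lemma Pprop_mul (K : Subgroup Γ) (F : Γ → ℤ) (hF : ∀ g g', F (g * g') = F g + F g')
    (τ : Γ) {g₁ g₂ : Γ} (h1 : Pprop K F τ g₁) (h2 : Pprop K F τ g₂) :
    Pprop K F τ (g₁ * g₂) := by
  obtain ⟨m₁, hm₁⟩ := h1
  obtain ⟨m₂, hm₂⟩ := h2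
  refine ⟨max m₁ (m₂ - F g₁), fun n hn => ?_⟩
  have e : τ ^ n * (g₁ * g₂) * τ ^ (-(n + F (g₁ * g₂))) =
      (τ ^ n * g₁ * τ ^ (-(n + F g₁))) *
        (τ ^ (n + F g₁) * g₂ * τ ^ (-(n + F g₁ + F g₂))) := by
    rw [hF]
    group
  rw [e]
  exact mul_mem (hm₁ n (le_trans (le_max_left _ _) hn))
    (hm₂ (n + F g₁) (by have := le_trans (le_max_right _ _) hn; omega))

lemma Pprop_inv (K : Subgroup Γ) (F : Γ → ℤ) (hF : ∀ g g', F (g * g') = F g + F g')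
    (τ : Γ) {g : Γ} (h : Pprop K F τ g) : Pprop K F τ g⁻¹ := by
  obtain ⟨m, hm⟩ := h
  refine ⟨m + F g, fun n hn => ?_⟩
  have e : τ ^ n * g⁻¹ * τ ^ (-(n + F g⁻¹)) =
      (τ ^ (n - F g) * g * τ ^ (-(n - F g + F g)))⁻¹ := by
    rw [F_inv F hF]
    group
  rw [e]
  exact inv_mem (hm (n - F g) (by omega))

lemma Pprop_self (K : Subgroup Γ) (F : Γ → ℤ) (τ : Γ) (hFτ : F τ = 1) :
    Pprop K F τ τ := by
  refine ⟨0, fun n hn => ?_⟩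
  have e : τ ^ n * τ * τ ^ (-(n + F τ)) = 1 := by rw [hFτ]; group
  rw [e]; exact one_mem K

end Pprop

section hnn2

variable {H : Type*} [Group H] {A B : Subgroup H} (φ : A ≃* B)

/-- the exponent sum homomorphism of an HNN extension -/
noncomputable def expSum : HNNExtension H A B φ →* Multiplicative ℤ :=
  HNNExtension.lift 1 (Multiplicative.ofAdd 1) (by intro a; simp)

lemma expSum_of (h : H) : expSum φ (HNNExtension.of h) = 1 := by
  simp [expSum]

lemma expSum_t : expSum φ (HNNExtension.t) = Multiplicative.ofAdd 1 := by
  simp [expSum]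

/-- conjugation into the base group propagates along nonnegative powers of `τ`. -/
lemma Pprop_of (τ : HNNExtension H A B φ)
    (hconj : ∀ h : H, ∃ h' : H, τ * HNNExtension.of h * τ⁻¹ = HNNExtension.of h')
    (F : HNNExtension H A B φ → ℤ) (hFof : ∀ h : H, F (HNNExtension.of h) = 0)
    (h : H) :
    Pprop (HNNExtension.of : H →* HNNExtension H A B φ).range F τ (HNNExtension.of h) := by
  have aux : ∀ (N : ℕ) (h : H), τ ^ N * HNNExtension.of h * (τ ^ N)⁻¹ ∈
      (HNNExtension.of : H →* HNNExtension H A B φ).range := by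
    intro N
    induction N with
    | zero => intro h; simpa using ⟨h, rfl⟩
    | succ N ih =>
        intro h
        obtain ⟨h', hh'⟩ := hconj h
        have e : τ ^ (N+1) * HNNExtension.of h * (τ ^ (N+1))⁻¹ =
            τ ^ N * (τ * HNNExtension.of h * τ⁻¹) * (τ ^ N)⁻¹ := by group
        rw [e, hh']
        exact ih h'
  refine ⟨0, fun n hn => ?_⟩
  have e : τ ^ n * HNNExtension.of h * τ ^ (-(n + F (HNNExtension.of h))) =
      τ ^ n.toNat * HNNExtension.of h * (τ ^ n.toNat)⁻¹ := by
    rw [hFof, add_zero, ← zpow_natCast τ n.toNat, Int.toNat_of_nonneg hn]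
    group
  rw [e]
  exact aux n.toNat h

lemma Pprop_all (τ : HNNExtension H A B φ) (hτ : τ = HNNExtension.t ∨ τ = HNNExtension.t⁻¹)
    (hconj : ∀ h : H, ∃ h' : H, τ * HNNExtension.of h * τ⁻¹ = HNNExtension.of h')
    (F : HNNExtension H A B φ → ℤ) (hF : ∀ g g', F (g * g') = F g + F g')
    (hFof : ∀ h : H, F (HNNExtension.of h) = 0) (hFτ : F τ = 1) (g : HNNExtension H A B φ) :
    Pprop (HNNExtension.of : H →* HNNExtension H A B φ).range F τ g := by
  induction g using HNNExtension.induction_on with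
  | of g => exact Pprop_of φ τ hconj F hFof g
  | t =>
      rcases hτ with h | h
      · rw [← h]; exact Pprop_self _ F τ hFτ
      · have : HNNExtension.t (φ := φ) = τ⁻¹ := by rw [h]; group
        rw [this]
        exact Pprop_inv _ F hF τ (Pprop_self _ F τ hFτ)
  | mul x y hx hy => exact Pprop_mul _ F hF τ hx hy
  | inv x hx => exact Pprop_inv _ F hF τ hx

end hnn2
end Stmt1Aux
namespace Stmt1Aux

section dir2
variable {H : Type*} [Group H] {A B : Subgroup H} (φ : A ≃* B)
variable {α : Type*} [Fintype α] [DecidableEq α]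

lemma hnn_not_negligible (η : α → HNNExtension H A B φ) (inv : α → α)
    (hsym : IsSymmetricGen η inv) (hAB : A = ⊤ ∨ B = ⊤) :
    ¬ StronglyNegligible {w : List α |
        evalWord η w ∈ (HNNExtension.of : H →* HNNExtension H A B φ).range} := by
  obtain ⟨hinv2, -, hinv, hgen⟩ := hsym
  set F : HNNExtension H A B φ → ℤ := fun g => Multiplicative.toAdd (expSum φ g) with hFdef
  have hF : ∀ g g', F (g * g') = F g + F g' := by
    intro g g'; simp [hFdef, map_mul]
  have hFof : ∀ h : H, F (HNNExtension.of h) = 0 := by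
    intro h; simp [hFdef, expSum_of]
  have hFt : F (HNNExtension.t) = 1 := by
    simp [hFdef, expSum_t]
  have hne : Nonempty α := by
    rcases isEmpty_or_nonempty α with hα | hα
    · exfalso
      have h0 : Set.range η = ∅ := Set.range_eq_empty η
      rw [h0, Subgroup.closure_empty] at hgen
      have ht : (HNNExtension.t : HNNExtension H A B φ) ∈ (⊥ : Subgroup _) := by
        rw [hgen]; exact Subgroup.mem_top _
      rw [Subgroup.mem_bot] at ht
      have h1 := congrArg F ht
      rw [hFt, F_one F hF] at h1
      exact one_ne_zero h1
    · exact hα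
  haveI := hne
  rcases hAB with hA | hB
  · have hconj : ∀ h : H, ∃ h' : H,
        HNNExtension.t * HNNExtension.of h * HNNExtension.t⁻¹ =
          (HNNExtension.of : H →* HNNExtension H A B φ) h' := by
      intro h
      exact ⟨φ ⟨h, hA ▸ Subgroup.mem_top h⟩,
        (HNNExtension.equiv_eq_conj ⟨h, hA ▸ Subgroup.mem_top h⟩).symm⟩
    obtain ⟨wτ, hwτ⟩ := exists_word η inv hinv hgen (HNNExtension.t)
    exact not_negligible η inv hinv2 hinv _ F hF _
      (fun a => Pprop_all φ _ (Or.inl rfl) hconj F hF hFof hFt (η a)) wτ hwτ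
  · set F' : HNNExtension H A B φ → ℤ := fun g => - F g with hF'def
    have hF' : ∀ g g', F' (g * g') = F' g + F' g' := by
      intro g g'; simp [hF'def, hF]; ring
    have hF'of : ∀ h : H, F' (HNNExtension.of h) = 0 := by
      intro h; simp [hF'def, hFof]
    have hF'τ : F' (HNNExtension.t)⁻¹ = 1 := by
      simp [hF'def, F_inv F hF, hFt]
    have hconj : ∀ h : H, ∃ h' : H,
        (HNNExtension.t)⁻¹ * HNNExtension.of h * ((HNNExtension.t)⁻¹)⁻¹ =
          (HNNExtension.of : H →* HNNExtension H A B φ) h' := by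
      intro h
      refine ⟨φ.symm ⟨h, hB ▸ Subgroup.mem_top h⟩, ?_⟩
      rw [inv_inv]
      exact (HNNExtension.equiv_symm_eq_conj ⟨h, hB ▸ Subgroup.mem_top h⟩).symm
    obtain ⟨wτ, hwτ⟩ := exists_word η inv hinv hgen (HNNExtension.t)⁻¹
    exact not_negligible η inv hinv2 hinv _ F' hF' _
      (fun a => Pprop_all φ _ (Or.inr rfl) hconj F' hF' hF'of hF'τ (η a)) wτ hwτ

end dir2
end Stmt1Aux
namespace Stmt1Aux

section L2
variable {V : Type*}

/-- inner product of finitely supported functions -/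
noncomputable def ip (f g : V →₀ ℝ) : ℝ := f.sum fun v x => x * g v

/-- `ℓ¹`-norm of a finitely supported function -/
noncomputable def l1 (f : V →₀ ℝ) : ℝ := f.sum fun _ x => |x|

lemma ip_eq_sum {S : Finset V} {f : V →₀ ℝ} (hf : f.support ⊆ S) (g : V →₀ ℝ) :
    ip f g = ∑ v ∈ S, f v * g v := by
  rw [ip, Finsupp.sum]
  exact Finset.sum_subset hf (fun v _ hv => by
    rw [Finsupp.notMem_support_iff.1 hv, zero_mul])

lemma l1_eq_sum {S : Finset V} {f : V →₀ ℝ} (hf : f.support ⊆ S) :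
    l1 f = ∑ v ∈ S, |f v| := by
  rw [l1, Finsupp.sum]
  exact Finset.sum_subset hf (fun v _ hv => by
    rw [Finsupp.notMem_support_iff.1 hv, abs_zero])

lemma ip_comm (f g : V →₀ ℝ) : ip f g = ip g f := by
  classical
  rw [ip_eq_sum (f := f) (Finset.subset_union_left (s₂ := g.support)) g,
    ip_eq_sum (f := g) (Finset.subset_union_right (s₁ := f.support)) f]
  exact Finset.sum_congr rfl (fun v _ => mul_comm _ _)

lemma ip_add_left (f g h : V →₀ ℝ) : ip (f + g) h = ip f h + ip g h := by
  classical
  set S := f.support ∪ g.support ∪ (f + g).support with hS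
  rw [ip_eq_sum (S := S) (f := f + g) Finset.subset_union_right h,
    ip_eq_sum (S := S) (f := f) (subset_trans Finset.subset_union_left
      Finset.subset_union_left) h,
    ip_eq_sum (S := S) (f := g) (subset_trans Finset.subset_union_right
      Finset.subset_union_left) h, ← Finset.sum_add_distrib]
  exact Finset.sum_congr rfl (fun v _ => by rw [Finsupp.add_apply]; ring)

lemma ip_smul_left (c : ℝ) (f g : V →₀ ℝ) : ip (c • f) g = c * ip f g := by
  classical
  rw [ip_eq_sum (S := f.support) (f := c • f) (Finsupp.support_smul) g,
    ip_eq_sum (S := f.support) (f := f) (le_refl _) g,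
    Finset.mul_sum]
  exact Finset.sum_congr rfl (fun v _ => by rw [Finsupp.smul_apply]; simp; ring)

lemma ip_neg_left (f g : V →₀ ℝ) : ip (-f) g = - ip f g := by
  have : (-f) = (-1 : ℝ) • f := by ext v; simp
  rw [this, ip_smul_left]; ring

lemma ip_sub_left (f g h : V →₀ ℝ) : ip (f - g) h = ip f h - ip g h := by
  rw [sub_eq_add_neg, ip_add_left, ip_neg_left]; ring

lemma ip_add_right (f g h : V →₀ ℝ) : ip f (g + h) = ip f g + ip f h := by
  rw [ip_comm, ip_add_left, ip_comm g f, ip_comm h f]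

lemma ip_sub_right (f g h : V →₀ ℝ) : ip f (g - h) = ip f g - ip f h := by
  rw [ip_comm, ip_sub_left, ip_comm g f, ip_comm h f]

lemma ip_self_nonneg (f : V →₀ ℝ) : 0 ≤ ip f f := by
  rw [ip, Finsupp.sum]
  exact Finset.sum_nonneg (fun v _ => mul_self_nonneg _)

/-- norm -/
noncomputable def nrm (f : V →₀ ℝ) : ℝ := Real.sqrt (ip f f)

lemma nrm_nonneg (f : V →₀ ℝ) : 0 ≤ nrm f := Real.sqrt_nonneg _

lemma nrm_sq (f : V →₀ ℝ) : nrm f * nrm f = ip f f := by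
  rw [nrm, Real.mul_self_sqrt (ip_self_nonneg f)]

lemma ip_cauchy (f g : V →₀ ℝ) : |ip f g| ≤ nrm f * nrm g := by
  classical
  set S := f.support ∪ g.support with hS
  have h1 : ip f g = ∑ v ∈ S, f v * g v :=
    ip_eq_sum (S := S) Finset.subset_union_left g
  have h2 : ip f f = ∑ v ∈ S, f v * f v :=
    ip_eq_sum (S := S) (f := f) Finset.subset_union_left f
  have h3 : ip g g = ∑ v ∈ S, g v * g v :=
    ip_eq_sum (S := S) (f := g) Finset.subset_union_right g
  have key := Finset.sum_mul_sq_le_sq_mul_sq S (fun v => f v) (fun v => g v)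
  have h4 : (ip f g) ^ 2 ≤ ip f f * ip g g := by
    rw [h1, h2, h3]
    simpa [sq] using key
  calc |ip f g| = Real.sqrt ((ip f g) ^ 2) := (Real.sqrt_sq_eq_abs _).symm
    _ ≤ Real.sqrt (ip f f * ip g g) := Real.sqrt_le_sqrt h4
    _ = nrm f * nrm g := by rw [Real.sqrt_mul (ip_self_nonneg f), nrm, nrm]

lemma ip_le_nrm_mul_nrm (f g : V →₀ ℝ) : ip f g ≤ nrm f * nrm g :=
  le_trans (le_abs_self _) (ip_cauchy f g)

end L2

section L2action
variable {V : Type*} {Γ : Type*} [Group Γ] [MulAction Γ V]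

/-- the permutation action on finitely supported functions -/
noncomputable def pia (g : Γ) (f : V →₀ ℝ) : V →₀ ℝ :=
  Finsupp.mapDomain (fun v => g • v) f

lemma smul_injective' (g : Γ) : Function.Injective (fun v : V => g • v) :=
  MulAction.injective g

lemma pia_apply (g : Γ) (f : V →₀ ℝ) (v : V) : pia g f v = f (g⁻¹ • v) := by
  have : v = g • (g⁻¹ • v) := by rw [smul_inv_smul]
  conv_lhs => rw [this]
  exact Finsupp.mapDomain_apply (smul_injective' g) f _

lemma pia_add (g : Γ) (f h : V →₀ ℝ) : pia g (f + h) = pia g f + pia g h :=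
  Finsupp.mapDomain_add

lemma pia_sub (g : Γ) (f h : V →₀ ℝ) : pia g (f - h) = pia g f - pia g h := by
  ext v; simp [pia_apply, Finsupp.sub_apply]

lemma pia_smul (g : Γ) (c : ℝ) (f : V →₀ ℝ) : pia g (c • f) = c • pia g f := by
  ext v; simp [pia_apply, Finsupp.smul_apply]

lemma pia_mul (g₁ g₂ : Γ) (f : V →₀ ℝ) : pia (g₁ * g₂) f = pia g₁ (pia g₂ f) := by
  ext v; simp only [pia_apply, mul_inv_rev, mul_smul]

lemma pia_single (g : Γ) (v : V) (c : ℝ) :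
    pia g (Finsupp.single v c) = Finsupp.single (g • v) c := by
  rw [pia, Finsupp.mapDomain_single]

lemma ip_pia (g : Γ) (f h : V →₀ ℝ) : ip (pia g f) (pia g h) = ip f h := by
  rw [ip, pia, Finsupp.sum_mapDomain_index_inj (smul_injective' g), ip]
  exact Finsupp.sum_congr (fun v _ => by rw [pia_apply, inv_smul_smul])

lemma nrm_pia (g : Γ) (f : V →₀ ℝ) : nrm (pia g f) = nrm f := by
  rw [nrm, nrm, ip_pia]

lemma ip_pia_left (g : Γ) (f h : V →₀ ℝ) : ip (pia g f) h = ip f (pia g⁻¹ h) := by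
  have : h = pia g (pia g⁻¹ h) := by rw [← pia_mul, mul_inv_cancel]; ext v; simp [pia_apply]
  conv_lhs => rw [this]
  rw [ip_pia]

lemma l1_pia (g : Γ) (f : V →₀ ℝ) : l1 (pia g f) = l1 f := by
  rw [l1, pia, Finsupp.sum_mapDomain_index_inj (smul_injective' g), l1]

lemma l1_add_le (f h : V →₀ ℝ) : l1 (f + h) ≤ l1 f + l1 h := by
  classical
  set S := f.support ∪ h.support ∪ (f + h).support with hS
  rw [l1_eq_sum (S := S) (f := f + h) Finset.subset_union_right,
    l1_eq_sum (S := S) (f := f) (subset_trans Finset.subset_union_left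
      Finset.subset_union_left),
    l1_eq_sum (S := S) (f := h) (subset_trans Finset.subset_union_right
      Finset.subset_union_left), ← Finset.sum_add_distrib]
  exact Finset.sum_le_sum (fun v _ => by rw [Finsupp.add_apply]; exact abs_add_le _ _)

end L2action
end Stmt1Aux
namespace Stmt1Aux

section L2more
variable {V : Type*}

lemma ip_zero_left (g : V →₀ ℝ) : ip 0 g = 0 := by
  rw [ip, Finsupp.sum_zero_index]

lemma ip_zero_right (f : V →₀ ℝ) : ip f 0 = 0 := by
  rw [ip_comm, ip_zero_left]

lemma eq_zero_of_ip_self_eq_zero {f : V →₀ ℝ} (h : ip f f = 0) : f = 0 := by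
  rw [ip, Finsupp.sum] at h
  have h2 := (Finset.sum_eq_zero_iff_of_nonneg
    (fun v _ => mul_self_nonneg (f v))).1 h
  ext v
  by_cases hv : v ∈ f.support
  · have := h2 v hv
    have := mul_self_eq_zero.1 this
    simpa using this
  · simpa using Finsupp.notMem_support_iff.1 hv

lemma ip_sum_left' {ι : Type*} (s : Finset ι) (F : ι → (V →₀ ℝ)) (g : V →₀ ℝ) :
    ip (∑ i ∈ s, F i) g = ∑ i ∈ s, ip (F i) g := by
  classical
  induction s using Finset.induction_on with
  | empty => simp [ip_zero_left]
  | insert _ _ hne ih =>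
      rw [Finset.sum_insert hne, Finset.sum_insert hne, ip_add_left, ih]

lemma ip_smul_right (c : ℝ) (f g : V →₀ ℝ) : ip f (c • g) = c * ip f g := by
  rw [ip_comm, ip_smul_left, ip_comm]

end L2more

section Mop
variable {V : Type*} {Γ : Type*} [Group Γ] [MulAction Γ V]
variable {α : Type*} [Fintype α]

/-- the Markov-type operator of a generating set -/
noncomputable def Mop (η : α → Γ) (f : V →₀ ℝ) : V →₀ ℝ := ∑ a : α, pia (η a) f

lemma Mop_add (η : α → Γ) (f g : V →₀ ℝ) : Mop η (f + g) = Mop η f + Mop η g := by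
  rw [Mop, Mop, Mop, ← Finset.sum_add_distrib]
  exact Finset.sum_congr rfl (fun a _ => pia_add _ _ _)

lemma Mop_sub (η : α → Γ) (f g : V →₀ ℝ) : Mop η (f - g) = Mop η f - Mop η g := by
  rw [Mop, Mop, Mop, ← Finset.sum_sub_distrib]
  exact Finset.sum_congr rfl (fun a _ => pia_sub _ _ _)

lemma Mop_smul (η : α → Γ) (c : ℝ) (f : V →₀ ℝ) : Mop η (c • f) = c • Mop η f := by
  rw [Mop, Mop, Finset.smul_sum]
  exact Finset.sum_congr rfl (fun a _ => pia_smul _ _ _)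

lemma Mop_zero (η : α → Γ) : Mop η (0 : V →₀ ℝ) = 0 := by
  have := Mop_smul η 0 (0 : V →₀ ℝ)
  simpa using this

lemma Mop_selfadj (η : α → Γ) (inv : α → α) (hinv2 : ∀ a, inv (inv a) = a)
    (hinv : ∀ a, η (inv a) = (η a)⁻¹) (f g : V →₀ ℝ) :
    ip (Mop η f) g = ip f (Mop η g) := by
  rw [Mop, ip_sum_left']
  have h1 : ∀ a : α, ip (pia (η a) f) g = ip f (pia (η (inv a)) g) := by
    intro a
    rw [ip_pia_left, hinv]
  rw [Finset.sum_congr rfl (fun a _ => h1 a)]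
  have e : Function.Bijective inv := (Function.Involutive.bijective hinv2)
  have h2 := Fintype.sum_bijective inv e
    (fun a => ip f (pia (η (inv a)) g)) (fun a => ip f (pia (η a) g)) (fun a => rfl)
  have h3 : ip f (Mop η g) = ∑ a : α, ip f (pia (η a) g) := by
    rw [ip_comm, Mop, ip_sum_left']
    exact Finset.sum_congr rfl (fun a _ => by rw [ip_comm (pia (η a) g) f])
  rw [h3, ← h2]

lemma Mop_ident_minus (η : α → Γ) (f : V →₀ ℝ) :
    ∑ a : α, ip (pia (η a) f - f) (pia (η a) f - f) =
      2 * (Fintype.card α * ip f f) - 2 * ip (Mop η f) f := by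
  have h1 : ∀ a : α, ip (pia (η a) f - f) (pia (η a) f - f) =
      2 * ip f f - 2 * ip (pia (η a) f) f := by
    intro a
    rw [ip_sub_left, ip_sub_right, ip_sub_right, ip_pia, ip_comm f (pia (η a) f)]
    ring
  rw [Finset.sum_congr rfl (fun a _ => h1 a), Finset.sum_sub_distrib]
  rw [Finset.sum_const, ← Finset.mul_sum, ← ip_sum_left']
  simp only [Finset.card_univ, nsmul_eq_mul]
  rw [Mop]
  ring

lemma Mop_ident_plus (η : α → Γ) (f : V →₀ ℝ) :
    ∑ a : α, ip (pia (η a) f + f) (pia (η a) f + f) =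
      2 * (Fintype.card α * ip f f) + 2 * ip (Mop η f) f := by
  have h1 : ∀ a : α, ip (pia (η a) f + f) (pia (η a) f + f) =
      2 * ip f f + 2 * ip (pia (η a) f) f := by
    intro a
    rw [ip_add_left, ip_add_right, ip_add_right, ip_pia, ip_comm f (pia (η a) f)]
    ring
  rw [Finset.sum_congr rfl (fun a _ => h1 a), Finset.sum_add_distrib]
  rw [Finset.sum_const, ← Finset.mul_sum, ← ip_sum_left']
  simp only [Finset.card_univ, nsmul_eq_mul]
  rw [Mop]
  ring

/-- numerical radius controls the operator norm for a self-adjoint operator -/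
lemma nrm_Mop_le (η : α → Γ) (inv : α → α) (hinv2 : ∀ a, inv (inv a) = a)
    (hinv : ∀ a, η (inv a) = (η a)⁻¹)
    (r : ℝ) (hr : 0 ≤ r) (hb : ∀ f : V →₀ ℝ, |ip (Mop η f) f| ≤ r * ip f f) :
    ∀ f : V →₀ ℝ, nrm (Mop η f) ≤ r * nrm f := by
  have hbil : ∀ f g : V →₀ ℝ, ip (Mop η f) g ≤ r * (nrm f * nrm g) := by
    intro f g
    by_cases hf : nrm f = 0
    · have hf0 : f = 0 := by
        apply eq_zero_of_ip_self_eq_zero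
        rw [← nrm_sq, hf, mul_zero]
      rw [hf0, Mop_zero, ip_zero_left]
      have hz : nrm (0 : V →₀ ℝ) = 0 := by rw [nrm, ip_zero_left, Real.sqrt_zero]
      rw [hz]
      simp
    by_cases hg : nrm g = 0
    · have hg0 : g = 0 := by
        apply eq_zero_of_ip_self_eq_zero
        rw [← nrm_sq, hg, mul_zero]
      rw [hg0, ip_zero_right]
      have hz : nrm (0 : V →₀ ℝ) = 0 := by rw [nrm, ip_zero_left, Real.sqrt_zero]
      rw [hz]
      simp
    have hfpos : 0 < nrm f := lt_of_le_of_ne (nrm_nonneg f) (Ne.symm hf)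
    have hgpos : 0 < nrm g := lt_of_le_of_ne (nrm_nonneg g) (Ne.symm hg)
    -- polarization bound
    have star : ∀ f g : V →₀ ℝ, ip (Mop η f) g ≤ (r / 2) * (ip f f + ip g g) := by
      intro f g
      have e1 : ip (Mop η (f + g)) (f + g) =
          ip (Mop η f) f + ip (Mop η f) g + ip (Mop η g) f + ip (Mop η g) g := by
        rw [Mop_add, ip_add_left, ip_add_right, ip_add_right]
        ring
      have e2 : ip (Mop η (f - g)) (f - g) =
          ip (Mop η f) f - ip (Mop η f) g - ip (Mop η g) f + ip (Mop η g) g := by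
        rw [Mop_sub, ip_sub_left, ip_sub_right, ip_sub_right]
        ring
      have e3 : ip (Mop η g) f = ip (Mop η f) g := by
        rw [Mop_selfadj η inv hinv2 hinv g f, ip_comm]
      have h4 : ip (Mop η (f+g)) (f+g) ≤ r * ip (f+g) (f+g) :=
        le_trans (le_abs_self _) (hb _)
      have h5 : - (r * ip (f-g) (f-g)) ≤ ip (Mop η (f-g)) (f-g) :=
        neg_le_of_abs_le (hb _)
      have e6 : ip (f+g) (f+g) + ip (f-g) (f-g) = 2 * ip f f + 2 * ip g g := by
        rw [ip_add_left, ip_add_right, ip_add_right, ip_sub_left, ip_sub_right, ip_sub_right,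
          ip_comm g f]
        ring
      nlinarith [h4, h5, e1, e2, e3, e6]
    -- scaling
    set c := Real.sqrt (nrm g / nrm f) with hc
    have hcpos : 0 < c := Real.sqrt_pos.2 (div_pos hgpos hfpos)
    have hc2 : c * c = nrm g / nrm f := Real.mul_self_sqrt (div_pos hgpos hfpos).le
    have happ := star (c • f) (c⁻¹ • g)
    rw [Mop_smul, ip_smul_left, ip_smul_right, ip_smul_left, ip_smul_right,
      ip_smul_left, ip_smul_right] at happ
    have hinv_c : c * (c⁻¹ * ip (Mop η f) g) = ip (Mop η f) g := by
      field_simp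
    rw [hinv_c] at happ
    have hexp : (r / 2) * (c * (c * ip f f) + c⁻¹ * (c⁻¹ * ip g g)) = r * (nrm f * nrm g) := by
      have h7 : ip f f = nrm f * nrm f := (nrm_sq f).symm
      have h8 : ip g g = nrm g * nrm g := (nrm_sq g).symm
      rw [h7, h8]
      have h9 : c⁻¹ * c⁻¹ = nrm f / nrm g := by
        rw [← mul_inv, hc2, inv_div]
      rw [← mul_assoc c c, hc2, ← mul_assoc c⁻¹ c⁻¹, h9]
      field_simp
      ring
    rw [hexp] at happ
    exact happ
  intro f
  by_cases hq : nrm (Mop η f) = 0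
  · rw [hq]; exact mul_nonneg hr (nrm_nonneg f)
  have hqpos : 0 < nrm (Mop η f) := lt_of_le_of_ne (nrm_nonneg _) (Ne.symm hq)
  have h1 : nrm (Mop η f) * nrm (Mop η f) ≤ (r * nrm f) * nrm (Mop η f) := by
    rw [nrm_sq]
    calc ip (Mop η f) (Mop η f) ≤ r * (nrm f * nrm (Mop η f)) := hbil f (Mop η f)
      _ = (r * nrm f) * nrm (Mop η f) := by ring
  exact le_of_mul_le_mul_right h1 hqpos

end Mop
end Stmt1Aux
namespace Stmt1Aux

section schottky
variable {V : Type*} {Γ : Type*} [Group Γ] [MulAction Γ V]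
variable {α : Type*} [Fintype α]

lemma l1_nonneg (f : V →₀ ℝ) : 0 ≤ l1 f := by
  rw [l1, Finsupp.sum]
  exact Finset.sum_nonneg (fun v _ => abs_nonneg _)

lemma l1_zero : l1 (0 : V →₀ ℝ) = 0 := by
  rw [l1, Finsupp.sum_zero_index]

lemma pia_one (f : V →₀ ℝ) : pia (1 : Γ) f = f := by
  ext v; rw [pia_apply]; simp

lemma nrm_add_le (f g : V →₀ ℝ) : nrm (f + g) ≤ nrm f + nrm g := by
  have h1 : ip (f + g) (f + g) ≤ (nrm f + nrm g) * (nrm f + nrm g) := by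
    rw [ip_add_left, ip_add_right, ip_add_right, ← nrm_sq, ← nrm_sq, ip_comm g f]
    have := ip_le_nrm_mul_nrm f g
    nlinarith [this]
  have h2 : nrm (f + g) = Real.sqrt (ip (f+g) (f+g)) := rfl
  rw [h2]
  calc Real.sqrt (ip (f+g) (f+g)) ≤ Real.sqrt ((nrm f + nrm g) * (nrm f + nrm g)) :=
        Real.sqrt_le_sqrt h1
    _ = |nrm f + nrm g| := Real.sqrt_mul_self_eq_abs _
    _ = nrm f + nrm g := abs_of_nonneg (add_nonneg (nrm_nonneg f) (nrm_nonneg g))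

lemma nrm_neg (f : V →₀ ℝ) : nrm (-f) = nrm f := by
  rw [nrm, nrm, ip_neg_left, ip_comm, ip_neg_left, ip_comm f f]
  ring_nf

lemma nrm_sub_le (f g : V →₀ ℝ) : nrm (f - g) ≤ nrm f + nrm g := by
  rw [sub_eq_add_neg]
  calc nrm (f + -g) ≤ nrm f + nrm (-g) := nrm_add_le _ _
    _ = nrm f + nrm g := by rw [nrm_neg]

/-- transport of `ℓ¹` almost-invariance along words -/
lemma l1_word (η : α → Γ) (μ : V →₀ ℝ) (B : ℝ)
    (hB : ∀ a : α, l1 (pia (η a) μ - μ) ≤ B) (W : List α) :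
    l1 (pia (evalWord η W) μ - μ) ≤ W.length * B := by
  induction W with
  | nil =>
      rw [evalWord_nil, pia_one]
      simp [l1_zero]
  | cons a W ih =>
      have e : pia (evalWord η (a :: W)) μ - μ =
          pia (η a) (pia (evalWord η W) μ - μ) + (pia (η a) μ - μ) := by
        rw [evalWord_cons, pia_mul, pia_sub]
        abel
      rw [e]
      calc l1 _ ≤ l1 (pia (η a) (pia (evalWord η W) μ - μ)) + l1 (pia (η a) μ - μ) :=
            l1_add_le _ _
        _ = l1 (pia (evalWord η W) μ - μ) + l1 (pia (η a) μ - μ) := by rw [l1_pia]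
        _ ≤ W.length * B + B := add_le_add ih (hB a)
        _ = (W.length + 1 : ℕ) * B := by push_cast; ring
        _ = ((a :: W).length : ℕ) * B := by rw [List.length_cons]

/-- measure of a set -/
noncomputable def mset (ν : V →₀ ℝ) (Y : Set V) : ℝ :=
  ν.sum fun v x => if v ∈ Y then x else 0

lemma mset_pia (g : Γ) (ν : V →₀ ℝ) (Y : Set V) :
    mset (pia g ν) Y = ν.sum fun v x => if g • v ∈ Y then x else 0 := by
  rw [mset, pia, Finsupp.sum_mapDomain_index_inj (smul_injective' g)]

lemma mset_add (ν₁ ν₂ : V →₀ ℝ) (Y : Set V) :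
    mset (ν₁ + ν₂) Y = mset ν₁ Y + mset ν₂ Y := by
  rw [mset, mset, mset]
  exact Finsupp.sum_add_index' (fun a => by simp) (fun a b₁ b₂ => by
    by_cases h : a ∈ Y <;> simp [h])

lemma abs_mset_le (ν : V →₀ ℝ) (Y : Set V) : |mset ν Y| ≤ l1 ν := by
  rw [mset, l1, Finsupp.sum, Finsupp.sum]
  calc |∑ v ∈ ν.support, if v ∈ Y then ν v else 0|
      ≤ ∑ v ∈ ν.support, |if v ∈ Y then ν v else 0| := Finset.abs_sum_le_sum_abs _ _
    _ ≤ ∑ v ∈ ν.support, |ν v| := Finset.sum_le_sum (fun v _ => by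
        by_cases h : v ∈ Y <;> simp [h, abs_nonneg])

/-- the total mass -/
noncomputable def tmass (ν : V →₀ ℝ) : ℝ := ν.sum fun _ x => x

lemma tmass_split (ν : V →₀ ℝ) (Y : Set V) :
    tmass ν = mset ν Y + ν.sum fun v x => if v ∈ Y then 0 else x := by
  rw [tmass, mset, ← Finsupp.sum_add]
  exact Finsupp.sum_congr (fun v _ => by by_cases h : v ∈ Y <;> simp [h])

/-- The core Schottky estimate at the level of measures. -/
lemma schottky_l1 (Y₁ Y₂ Y₃ Y₄ : Set V) (p q : Γ)
    (h12 : ∀ v, v ∈ Y₁ → v ∈ Y₂ → False) (h13 : ∀ v, v ∈ Y₁ → v ∈ Y₃ → False)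
    (h14 : ∀ v, v ∈ Y₁ → v ∈ Y₄ → False) (h23 : ∀ v, v ∈ Y₂ → v ∈ Y₃ → False)
    (h24 : ∀ v, v ∈ Y₂ → v ∈ Y₄ → False) (h34 : ∀ v, v ∈ Y₃ → v ∈ Y₄ → False)
    (hp1 : ∀ v : V, v ∉ Y₂ → p • v ∈ Y₁) (hq1 : ∀ v : V, v ∉ Y₄ → q • v ∈ Y₃)
    (μ : V →₀ ℝ) (hμ : ∀ v, 0 ≤ μ v) :
    tmass μ ≤ l1 (pia p μ - μ) + l1 (pia q μ - μ) := by
  have key : ∀ (Ya Yb : Set V) (g : Γ), (∀ v : V, v ∉ Yb → g • v ∈ Ya) →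
      tmass μ - mset μ Yb ≤ mset μ Ya + l1 (pia g μ - μ) := by
    intro Ya Yb g hg
    have k1 : tmass μ - mset μ Yb ≤ mset (pia g μ) Ya := by
      rw [tmass_split μ Yb, mset_pia]
      have : ∀ v ∈ μ.support, (if v ∈ Yb then 0 else μ v) ≤ (if g • v ∈ Ya then μ v else 0) := by
        intro v _
        by_cases h : v ∈ Yb
        · simp only [if_pos h]
          by_cases h2 : g • v ∈ Ya <;> simp [h2, hμ v]
        · rw [if_neg h, if_pos (hg v h)]
      calc mset μ Yb + Finsupp.sum μ (fun v x => if v ∈ Yb then 0 else x) - mset μ Yb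
          = Finsupp.sum μ (fun v x => if v ∈ Yb then 0 else x) := by ring
        _ ≤ Finsupp.sum μ (fun v x => if g • v ∈ Ya then x else 0) := by
            rw [Finsupp.sum, Finsupp.sum]
            exact Finset.sum_le_sum this
    have k2 : mset (pia g μ) Ya ≤ mset μ Ya + l1 (pia g μ - μ) := by
      have e : pia g μ = μ + (pia g μ - μ) := by abel
      calc mset (pia g μ) Ya = mset μ Ya + mset (pia g μ - μ) Ya := by
            rw [← mset_add, ← e]
        _ ≤ mset μ Ya + l1 (pia g μ - μ) := by
            have := abs_mset_le (pia g μ - μ) Ya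
            have := le_abs_self (mset (pia g μ - μ) Ya)
            linarith
    linarith
  have kp := key Y₁ Y₂ p hp1
  have kq := key Y₃ Y₄ q hq1
  have hdisj : mset μ Y₁ + mset μ Y₂ + mset μ Y₃ + mset μ Y₄ ≤ tmass μ := by
    rw [tmass, mset, mset, mset, mset, ← Finsupp.sum_add, ← Finsupp.sum_add, ← Finsupp.sum_add]
    rw [Finsupp.sum, Finsupp.sum]
    apply Finset.sum_le_sum
    intro v _
    by_cases h1 : v ∈ Y₁ <;> by_cases h2 : v ∈ Y₂ <;> by_cases h3 : v ∈ Y₃ <;>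
      by_cases h4 : v ∈ Y₄ <;>
      first
        | exact absurd (h12 v ‹_› ‹_›) not_false
        | exact absurd (h13 v ‹_› ‹_›) not_false
        | exact absurd (h14 v ‹_› ‹_›) not_false
        | exact absurd (h23 v ‹_› ‹_›) not_false
        | exact absurd (h24 v ‹_› ‹_›) not_false
        | exact absurd (h34 v ‹_› ‹_›) not_false
        | (simp [*]; try exact hμ v)
  linarith

end schottky
end Stmt1Aux
namespace Stmt1Aux

section radius
variable {V : Type*} {Γ : Type*} [Group Γ] [MulAction Γ V]
variable {α : Type*} [Fintype α]

lemma ip_single_left (o : V) (g : V →₀ ℝ) : ip (Finsupp.single o 1) g = g o := by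
  rw [ip, Finsupp.sum_single_index (by simp), one_mul]

lemma schottky_radius_bound [Nonempty α]
    (η : α → Γ) (inv : α → α) (hinv2 : ∀ a, inv (inv a) = a)
    (hinv : ∀ a, η (inv a) = (η a)⁻¹)
    (Y₁ Y₂ Y₃ Y₄ : Set V)
    (h12 : ∀ v, v ∈ Y₁ → v ∈ Y₂ → False) (h13 : ∀ v, v ∈ Y₁ → v ∈ Y₃ → False)
    (h14 : ∀ v, v ∈ Y₁ → v ∈ Y₄ → False) (h23 : ∀ v, v ∈ Y₂ → v ∈ Y₃ → False)
    (h24 : ∀ v, v ∈ Y₂ → v ∈ Y₄ → False) (h34 : ∀ v, v ∈ Y₃ → v ∈ Y₄ → False)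
    (p q : Γ) (hp1 : ∀ v : V, v ∉ Y₂ → p • v ∈ Y₁) (hq1 : ∀ v : V, v ∉ Y₄ → q • v ∈ Y₃)
    (wp wq : List α) (hwp : evalWord η wp = p) (hwq : evalWord η wq = q)
    (R : ℕ) (hR1 : 1 ≤ R) (hRp : wp.length ≤ R) (hRq : wq.length ≤ R)
    (f : V →₀ ℝ) :
    |ip (Mop η f) f| ≤ ((Fintype.card α : ℝ) - 1 / (32 * R ^ 2)) * ip f f := by
  classical
  by_cases hf0 : f = 0
  · rw [hf0, Mop_zero, ip_zero_left]
    simp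
  set μ := Finsupp.mapRange (fun x : ℝ => x * x) (by norm_num) f with hμdef
  have hμv : ∀ v, μ v = f v * f v := fun v => Finsupp.mapRange_apply
  have hμ : ∀ v, 0 ≤ μ v := fun v => by rw [hμv]; exact mul_self_nonneg _
  have hT : tmass μ = ip f f := by
    rw [tmass, ip, Finsupp.sum, Finsupp.sum]
    rw [Finset.sum_subset (Finsupp.support_mapRange (g := f))]
    · exact Finset.sum_congr rfl (fun v _ => hμv v)
    · intro v _ hv
      exact Finsupp.notMem_support_iff.1 hv
  have hTnn : 0 ≤ tmass μ := by rw [hT]; exact ip_self_nonneg f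
  have hTpos : 0 < tmass μ := by
    rcases lt_or_eq_of_le hTnn with h | h
    · exact h
    · exfalso; exact hf0 (eq_zero_of_ip_self_eq_zero (by rw [← hT, ← h]))
  obtain ⟨a₀, -, ha₀⟩ := Finset.exists_max_image Finset.univ
    (fun a => l1 (pia (η a) μ - μ)) Finset.univ_nonempty
  set B := l1 (pia (η a₀) μ - μ) with hBdef
  have hBnn : 0 ≤ B := l1_nonneg _
  have hBa : ∀ a : α, l1 (pia (η a) μ - μ) ≤ B := fun a => ha₀ a (Finset.mem_univ a)
  have h1 := schottky_l1 Y₁ Y₂ Y₃ Y₄ p q h12 h13 h14 h23 h24 h34 hp1 hq1 μ hμ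
  have h2 : l1 (pia p μ - μ) ≤ (R : ℝ) * B := by
    rw [← hwp]
    calc l1 (pia (evalWord η wp) μ - μ) ≤ wp.length * B := l1_word η μ B hBa wp
      _ ≤ R * B := by
          apply mul_le_mul_of_nonneg_right _ hBnn
          exact_mod_cast hRp
  have h3 : l1 (pia q μ - μ) ≤ (R : ℝ) * B := by
    rw [← hwq]
    calc l1 (pia (evalWord η wq) μ - μ) ≤ wq.length * B := l1_word η μ B hBa wq
      _ ≤ R * B := by
          apply mul_le_mul_of_nonneg_right _ hBnn
          exact_mod_cast hRq
  have hRB : tmass μ ≤ 2 * R * B := by linarith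
  set dm := pia (η a₀) f - f with hdm
  set dp := pia (η a₀) f + f with hdp
  have hpoint : ∀ v, (pia (η a₀) μ - μ) v = dm v * dp v := by
    intro v
    rw [Finsupp.sub_apply, pia_apply, hμv, hμv, hdm, hdp, Finsupp.sub_apply,
      Finsupp.add_apply, pia_apply]
    ring
  have hl1B : B ≤ nrm dm * nrm dp := by
    set S := (pia (η a₀) μ - μ).support with hS
    have e1 : B = ∑ v ∈ S, |dm v| * |dp v| := by
      rw [hBdef, l1, Finsupp.sum]
      exact Finset.sum_congr rfl (fun v _ => by rw [hpoint v, abs_mul])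
    have e2 : ∑ v ∈ S, |dm v| ^ 2 ≤ ip dm dm := by
      rw [ip_eq_sum (S := S ∪ dm.support) (Finset.subset_union_right) dm]
      calc ∑ v ∈ S, |dm v| ^ 2 = ∑ v ∈ S, dm v * dm v := by
            exact Finset.sum_congr rfl (fun v _ => by rw [sq_abs, sq])
        _ ≤ ∑ v ∈ S ∪ dm.support, dm v * dm v :=
            Finset.sum_le_sum_of_subset_of_nonneg Finset.subset_union_left
              (fun v _ _ => mul_self_nonneg _)
    have e3 : ∑ v ∈ S, |dp v| ^ 2 ≤ ip dp dp := by
      rw [ip_eq_sum (S := S ∪ dp.support) (Finset.subset_union_right) dp]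
      calc ∑ v ∈ S, |dp v| ^ 2 = ∑ v ∈ S, dp v * dp v := by
            exact Finset.sum_congr rfl (fun v _ => by rw [sq_abs, sq])
        _ ≤ ∑ v ∈ S ∪ dp.support, dp v * dp v :=
            Finset.sum_le_sum_of_subset_of_nonneg Finset.subset_union_left
              (fun v _ _ => mul_self_nonneg _)
    have key := Finset.sum_mul_sq_le_sq_mul_sq S (fun v => |dm v|) (fun v => |dp v|)
    have e4 : B ^ 2 ≤ ip dm dm * ip dp dp := by
      rw [e1]
      calc (∑ v ∈ S, |dm v| * |dp v|) ^ 2 ≤ (∑ v ∈ S, |dm v| ^ 2) * ∑ v ∈ S, |dp v| ^ 2 := key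
        _ ≤ ip dm dm * ip dp dp := by
            apply mul_le_mul e2 e3 (Finset.sum_nonneg (fun v _ => sq_nonneg _))
              (ip_self_nonneg _)
    calc B = Real.sqrt (B ^ 2) := by rw [Real.sqrt_sq hBnn]
      _ ≤ Real.sqrt (ip dm dm * ip dp dp) := Real.sqrt_le_sqrt e4
      _ = nrm dm * nrm dp := by rw [Real.sqrt_mul (ip_self_nonneg _), nrm, nrm]
  have hdmf : nrm dm ≤ 2 * nrm f := by
    rw [hdm]
    calc nrm (pia (η a₀) f - f) ≤ nrm (pia (η a₀) f) + nrm f := nrm_sub_le _ _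
      _ = 2 * nrm f := by rw [nrm_pia]; ring
  have hdpf : nrm dp ≤ 2 * nrm f := by
    rw [hdp]
    calc nrm (pia (η a₀) f + f) ≤ nrm (pia (η a₀) f) + nrm f := nrm_add_le _ _
      _ = 2 * nrm f := by rw [nrm_pia]; ring
  have hfnn : 0 ≤ nrm f := nrm_nonneg f
  have hdmnn : 0 ≤ nrm dm := nrm_nonneg _
  have hdpnn : 0 ≤ nrm dp := nrm_nonneg _
  have hRnn : (0:ℝ) ≤ (R:ℝ) := Nat.cast_nonneg R
  have hmainm : tmass μ ≤ 4 * R * (nrm dm * nrm f) := by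
    have s1 : B ≤ nrm dm * (2 * nrm f) :=
      le_trans hl1B (mul_le_mul_of_nonneg_left hdpf hdmnn)
    have s2 : 2 * (R:ℝ) * B ≤ 2 * R * (nrm dm * (2 * nrm f)) :=
      mul_le_mul_of_nonneg_left s1 (by positivity)
    calc tmass μ ≤ 2 * (R:ℝ) * B := hRB
      _ ≤ 2 * R * (nrm dm * (2 * nrm f)) := s2
      _ = 4 * R * (nrm dm * nrm f) := by ring
  have hmainp : tmass μ ≤ 4 * R * (nrm dp * nrm f) := by
    have s1 : B ≤ (2 * nrm f) * nrm dp :=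
      le_trans hl1B (mul_le_mul_of_nonneg_right hdmf hdpnn)
    have s2 : 2 * (R:ℝ) * B ≤ 2 * R * ((2 * nrm f) * nrm dp) :=
      mul_le_mul_of_nonneg_left s1 (by positivity)
    calc tmass μ ≤ 2 * (R:ℝ) * B := hRB
      _ ≤ 2 * R * ((2 * nrm f) * nrm dp) := s2
      _ = 4 * R * (nrm dp * nrm f) := by ring
  have hsqm : tmass μ ≤ 16 * (R:ℝ)^2 * ip dm dm := by
    have h5 := mul_self_le_mul_self hTpos.le hmainm
    have h6 : (4 * (R:ℝ) * (nrm dm * nrm f)) * (4 * R * (nrm dm * nrm f)) =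
        16 * (R:ℝ)^2 * (nrm dm * nrm dm) * (nrm f * nrm f) := by ring
    rw [h6, nrm_sq, nrm_sq, ← hT] at h5
    have h7 : tmass μ * tmass μ ≤ (16 * (R:ℝ)^2 * ip dm dm) * tmass μ := by linarith
    exact le_of_mul_le_mul_right h7 hTpos
  have hsqp : tmass μ ≤ 16 * (R:ℝ)^2 * ip dp dp := by
    have h5 := mul_self_le_mul_self hTpos.le hmainp
    have h6 : (4 * (R:ℝ) * (nrm dp * nrm f)) * (4 * R * (nrm dp * nrm f)) =
        16 * (R:ℝ)^2 * (nrm dp * nrm dp) * (nrm f * nrm f) := by ring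
    rw [h6, nrm_sq, nrm_sq, ← hT] at h5
    have h7 : tmass μ * tmass μ ≤ (16 * (R:ℝ)^2 * ip dp dp) * tmass μ := by linarith
    exact le_of_mul_le_mul_right h7 hTpos
  have hid1 := Mop_ident_minus η f
  have hid2 := Mop_ident_plus η f
  have htermm : ip dm dm ≤ ∑ a : α, ip (pia (η a) f - f) (pia (η a) f - f) :=
    Finset.single_le_sum (f := fun a : α => ip (pia (η a) f - f) (pia (η a) f - f))
      (fun a _ => ip_self_nonneg _) (Finset.mem_univ a₀)
  have htermp : ip dp dp ≤ ∑ a : α, ip (pia (η a) f + f) (pia (η a) f + f) :=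
    Finset.single_le_sum (f := fun a : α => ip (pia (η a) f + f) (pia (η a) f + f))
      (fun a _ => ip_self_nonneg _) (Finset.mem_univ a₀)
  have hR2pos : (0:ℝ) < 32 * (R:ℝ)^2 := by
    have : (1:ℝ) ≤ (R:ℝ) := by exact_mod_cast hR1
    nlinarith
  rw [abs_le]
  constructor
  · -- lower bound
    have hup : tmass μ ≤ 16 * (R:ℝ)^2 * (2 * (Fintype.card α * ip f f) + 2 * ip (Mop η f) f) := by
      calc tmass μ ≤ 16 * (R:ℝ)^2 * ip dp dp := hsqp
        _ ≤ _ := by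
            apply mul_le_mul_of_nonneg_left _ (by positivity)
            rw [← hid2]
            exact htermp
    rw [hT] at hup
    have e : (-(((Fintype.card α : ℝ) - 1 / (32 * R ^ 2)) * ip f f)) * (32 * (R:ℝ)^2) =
        -(Fintype.card α * ip f f * (32 * R^2)) + ip f f := by
      field_simp
      ring
    have e2 : ip (Mop η f) f * (32 * (R:ℝ)^2) ≥
        -(Fintype.card α * ip f f * (32 * R^2)) + ip f f := by nlinarith
    have := le_of_mul_le_mul_right (by linarith [e, e2] : (-(((Fintype.card α : ℝ) - 1 / (32 * R ^ 2)) * ip f f)) * (32 * (R:ℝ)^2) ≤ ip (Mop η f) f * (32 * (R:ℝ)^2)) hR2pos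
    linarith
  · have hup : tmass μ ≤ 16 * (R:ℝ)^2 * (2 * (Fintype.card α * ip f f) - 2 * ip (Mop η f) f) := by
      calc tmass μ ≤ 16 * (R:ℝ)^2 * ip dm dm := hsqm
        _ ≤ _ := by
            apply mul_le_mul_of_nonneg_left _ (by positivity)
            rw [← hid1]
            exact htermm
    rw [hT] at hup
    have e : (((Fintype.card α : ℝ) - 1 / (32 * R ^ 2)) * ip f f) * (32 * (R:ℝ)^2) =
        Fintype.card α * ip f f * (32 * R^2) - ip f f := by
      field_simp
    have e2 : ip (Mop η f) f * (32 * (R:ℝ)^2) ≤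
        Fintype.card α * ip f f * (32 * R^2) - ip f f := by nlinarith
    have := le_of_mul_le_mul_right (by linarith [e, e2] :
      ip (Mop η f) f * (32 * (R:ℝ)^2) ≤ (((Fintype.card α : ℝ) - 1 / (32 * R ^ 2)) * ip f f) * (32 * (R:ℝ)^2)) hR2pos
    linarith

end radius
end Stmt1Aux
namespace Stmt1Aux

section negligible
variable {V : Type*} {Γ : Type*} [Group Γ] [MulAction Γ V]
variable {α : Type*} [Fintype α] [DecidableEq α]

lemma wordFinset_zero : wordFinset α 0 = {([] : List α)} := by
  ext w
  rw [mem_wordFinset, List.length_eq_zero_iff, Finset.mem_singleton]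

lemma sum_wordFinset_succ {M : Type*} [AddCommMonoid M] (G : List α → M) (n : ℕ) :
    ∑ w ∈ wordFinset α (n + 1), G w = ∑ a : α, ∑ w ∈ wordFinset α n, G (a :: w) := by
  have himg : wordFinset α (n+1) =
      ((Finset.univ : Finset α) ×ˢ wordFinset α n).image (fun p => p.1 :: p.2) := by
    ext w
    rw [mem_wordFinset, Finset.mem_image]
    constructor
    · intro hw
      cases w with
      | nil => simp at hw
      | cons a u =>
          refine ⟨(a, u), ?_, rfl⟩
          rw [Finset.mem_product]
          exact ⟨Finset.mem_univ _, mem_wordFinset.2 (by simpa using hw)⟩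
    · rintro ⟨p, hp, rfl⟩
      rw [Finset.mem_product] at hp
      simp [mem_wordFinset.1 hp.2]
  rw [himg, Finset.sum_image (by
    rintro ⟨a, u⟩ - ⟨b, v⟩ - h
    simpa using h)]
  rw [Finset.sum_product]

lemma pia_finset_sum {ι : Type*} (s : Finset ι) (g : Γ) (F : ι → (V →₀ ℝ)) :
    pia g (∑ i ∈ s, F i) = ∑ i ∈ s, pia g (F i) := by
  classical
  induction s using Finset.induction_on with
  | empty => simp [pia]
  | insert _ _ hne ih => rw [Finset.sum_insert hne, Finset.sum_insert hne, pia_add, ih]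

/-- The word-vector identity: iterating the Markov operator on the delta function counts
words. -/
lemma iterate_Mop_eq (η : α → Γ) (o : V) (n : ℕ) :
    (Mop η (V := V))^[n] (Finsupp.single o 1) =
      ∑ w ∈ wordFinset α n, Finsupp.single (evalWord η w • o) (1:ℝ) := by
  induction n with
  | zero =>
      rw [Function.iterate_zero_apply, wordFinset_zero, Finset.sum_singleton]
      simp
  | succ n ih =>
      rw [Function.iterate_succ_apply', ih]
      rw [sum_wordFinset_succ (fun w => Finsupp.single (evalWord η w • o) (1:ℝ)) n, Mop]
      rw [Finset.sum_congr rfl (fun a _ =>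
        pia_finset_sum (wordFinset α n) (η a) (fun w => Finsupp.single (evalWord η w • o) 1))]
      refine Finset.sum_congr rfl (fun a _ => Finset.sum_congr rfl (fun w _ => ?_))
      rw [pia_single, evalWord_cons, mul_smul]

/-- The abstract negligibility criterion from a Schottky family. -/
lemma negligible_of_schottky [Nonempty α]
    (η : α → Γ) (inv : α → α) (hinv2 : ∀ a, inv (inv a) = a)
    (hinv : ∀ a, η (inv a) = (η a)⁻¹)
    (Y₁ Y₂ Y₃ Y₄ : Set V)
    (h12 : ∀ v, v ∈ Y₁ → v ∈ Y₂ → False) (h13 : ∀ v, v ∈ Y₁ → v ∈ Y₃ → False)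
    (h14 : ∀ v, v ∈ Y₁ → v ∈ Y₄ → False) (h23 : ∀ v, v ∈ Y₂ → v ∈ Y₃ → False)
    (h24 : ∀ v, v ∈ Y₂ → v ∈ Y₄ → False) (h34 : ∀ v, v ∈ Y₃ → v ∈ Y₄ → False)
    (p q : Γ) (hp1 : ∀ v : V, v ∉ Y₂ → p • v ∈ Y₁) (hq1 : ∀ v : V, v ∉ Y₄ → q • v ∈ Y₃)
    (wp wq : List α) (hwp : evalWord η wp = p) (hwq : evalWord η wq = q)
    (o : V) :
    StronglyNegligible {w : List α | evalWord η w • o = o} := by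
  classical
  set k := Fintype.card α with hk
  have hk1 : 1 ≤ k := Fintype.card_pos
  have hkR : (1:ℝ) ≤ (k:ℝ) := by exact_mod_cast hk1
  set R : ℕ := max (max wp.length wq.length) 1 with hR
  have hR1 : 1 ≤ R := le_max_right _ _
  have hRp : wp.length ≤ R := le_trans (le_max_left _ _) (le_max_left _ _)
  have hRq : wq.length ≤ R := le_trans (le_max_right _ _) (le_max_left _ _)
  set r : ℝ := (k : ℝ) - 1 / (32 * R ^ 2) with hrdef
  have hRR : (1:ℝ) ≤ (R:ℝ) := by exact_mod_cast hR1
  have hRe : (0:ℝ) < 1 / (32 * (R:ℝ) ^ 2) := by positivity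
  have hRe1 : 1 / (32 * (R:ℝ) ^ 2) ≤ 1 / 32 := by
    apply div_le_div_of_nonneg_left (by norm_num) (by norm_num)
    nlinarith
  have hr0 : 0 < r := by
    rw [hrdef]
    nlinarith
  have hrk : r < k := by
    rw [hrdef]
    linarith
  have hrad := schottky_radius_bound η inv hinv2 hinv Y₁ Y₂ Y₃ Y₄
    h12 h13 h14 h23 h24 h34 p q hp1 hq1 wp wq hwp hwq R hR1 hRp hRq
  have hnorm := nrm_Mop_le η inv hinv2 hinv r hr0.le hrad
  set δ : V →₀ ℝ := Finsupp.single o 1 with hδ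
  have hδnrm : nrm δ = 1 := by
    rw [nrm, hδ, ip_single_left]
    simp
  have hFnrm : ∀ n : ℕ, nrm ((Mop η (V := V))^[n] δ) ≤ r ^ n := by
    intro n
    induction n with
    | zero => rw [Function.iterate_zero_apply, hδnrm, pow_zero]
    | succ n ih =>
        rw [Function.iterate_succ_apply']
        calc nrm (Mop η ((Mop η (V := V))^[n] δ)) ≤ r * nrm ((Mop η (V := V))^[n] δ) :=
              hnorm _
          _ ≤ r * r ^ n := mul_le_mul_of_nonneg_left ih hr0.le
          _ = r ^ (n+1) := by ring
  have hcount : ∀ n : ℕ,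
      ((((wordFinset α n).filter (fun w => evalWord η w • o = o)).card : ℝ)) =
        ip δ ((Mop η (V := V))^[n] δ) := by
    intro n
    rw [iterate_Mop_eq η o n, hδ, ip_single_left, Finsupp.finset_sum_apply]
    rw [Finset.sum_congr rfl (fun w _ => Finsupp.single_apply (a := evalWord η w • o)
      (a' := o) (b := (1:ℝ)))]
    rw [Finset.sum_boole]
  have hkpos : (0:ℝ) < (k:ℝ) := by linarith
  refine ⟨1, r / k, one_pos, div_pos hr0 hkpos, (div_lt_one hkpos).2 hrk, fun n => ?_⟩
  have h1 : wordCount {w : List α | evalWord η w • o = o} n =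
      ((wordFinset α n).filter (fun w => evalWord η w • o = o)).card := by
    rw [wordCount_eq]
    rfl
  have h2 : (((wordFinset α n).filter (fun w => evalWord η w • o = o)).card : ℝ) ≤ r ^ n := by
    rw [hcount n]
    calc ip δ ((Mop η (V := V))^[n] δ) ≤ nrm δ * nrm ((Mop η (V := V))^[n] δ) :=
          ip_le_nrm_mul_nrm _ _
      _ = nrm ((Mop η (V := V))^[n] δ) := by rw [hδnrm, one_mul]
      _ ≤ r ^ n := hFnrm n
  have h3 : (1:ℝ) * (r / k) ^ n * (k:ℝ) ^ n = r ^ n := by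
    rw [one_mul, div_pow, div_mul_cancel₀]
    positivity
  rw [h1, h3]
  exact h2

end negligible
end Stmt1Aux
namespace Stmt1Aux

section britton
open HNNExtension
variable {H : Type*} [Group H] {A B : Subgroup H} (φ : A ≃* B)

local notation "RW" => HNNExtension.NormalWord.ReducedWord H A B

/-- every element of an HNN extension is the product of some reduced word -/
lemma exists_reduced (g : HNNExtension H A B φ) : ∃ w : RW, w.prod φ = g := by
  rcases HNNExtension.NormalWord.TransversalPair.nonempty H A B with ⟨d⟩
  exact ⟨((HNNExtension.NormalWord.equiv φ d) g).toReducedWord,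
    (HNNExtension.NormalWord.equiv φ d).symm_apply_apply g⟩

/-- the first-letter predicate: `g` has a reduced form starting with `x·(coset)·t^u ⋯`. -/
def Qp (x : H) (u : ℤˣ) (g : HNNExtension H A B φ) : Prop :=
  ∃ w : RW, w.prod φ = g ∧ (w.toList.map Prod.fst).head? = some u ∧
    x⁻¹ * w.head ∈ toSubgroup A B (-u)

/-- appending an element of `H` to a reduced word -/
lemma prod_mul_of (w : RW) (h : H) :
    ∃ w₂ : RW, w₂.prod φ = w.prod φ * HNNExtension.of h ∧
      w₂.toList.map Prod.fst = w.toList.map Prod.fst ∧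
      (w.toList ≠ [] → w₂.head = w.head) := by
  rcases List.eq_nil_or_concat w.toList with hl | ⟨l', ⟨u, g⟩, hl⟩
  · refine ⟨⟨w.head * h, [], List.isChain_nil⟩, ?_, by simp [hl], by simp [hl]⟩
    simp [HNNExtension.NormalWord.ReducedWord.prod, hl, map_mul]
  · rw [List.concat_eq_append] at hl
    have hchain := w.chain
    rw [hl] at hchain
    have hchain₂ : (l' ++ [(u, g * h)]).IsChain
        (fun a b => a.2 ∈ toSubgroup A B a.1 → a.1 = b.1) := by
      rw [List.isChain_append] at hchain ⊢
      refine ⟨hchain.1, List.isChain_singleton _, ?_⟩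
      intro x hx y hy
      simp only [List.head?_cons, Option.mem_def, Option.some.injEq] at hy
      subst hy
      exact hchain.2.2 x hx (u, g) rfl
    refine ⟨⟨w.head, l' ++ [(u, g * h)], hchain₂⟩, ?_, by simp [hl], fun _ => rfl⟩
    simp only [HNNExtension.NormalWord.ReducedWord.prod, hl, List.map_append, List.map_cons,
      List.map_nil, List.prod_append, List.prod_cons, List.prod_nil, map_mul]
    group

/-- Britton uniqueness transported along right multiplication by the base group. -/
lemma Qp_unique {x x' : H} {u u' : ℤˣ} {g : HNNExtension H A B φ} (h : H)
    (hQ : Qp φ x u g) (hQ' : Qp φ x' u' (g * HNNExtension.of h)) :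
    u = u' ∧ x⁻¹ * x' ∈ toSubgroup A B (-u) := by
  obtain ⟨w, hw, hwu, hwx⟩ := hQ
  obtain ⟨w', hw', hwu', hwx'⟩ := hQ'
  obtain ⟨w₂, hw₂, hmap₂, hhead₂⟩ := prod_mul_of φ w h
  have hprod : w₂.prod φ = w'.prod φ := by rw [hw₂, hw, hw']
  have hfst := HNNExtension.ReducedWord.map_fst_eq_and_of_prod_eq φ hprod
  have huu : u = u' := by
    have h1 : (w₂.toList.map Prod.fst).head? = some u := by rw [hmap₂]; exact hwu
    have h2 : (w'.toList.map Prod.fst).head? = some u' := hwu'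
    rw [hfst.1] at h1
    rw [h1] at h2
    exact Option.some.inj h2
  refine ⟨huu, ?_⟩
  have hne : w.toList ≠ [] := by
    intro hnil
    rw [hnil] at hwu
    simp at hwu
  have hhead : w₂.head = w.head := hhead₂ hne
  have hmem : w₂.head⁻¹ * w'.head ∈ toSubgroup A B (-u) := by
    apply hfst.2
    rw [← List.head?_map, hmap₂, hwu]
    rfl
  rw [hhead] at hmem
  have hx'w : x'⁻¹ * w'.head ∈ toSubgroup A B (-u) := by
    rw [huu]; exact hwx'
  have : (x⁻¹ * w.head) * (w.head⁻¹ * w'.head) * (x'⁻¹ * w'.head)⁻¹ = x⁻¹ * x' := by group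
  rw [← this]
  exact mul_mem (mul_mem hwx hmem) (inv_mem hx'w)

/-- the ping-pong push: if `g` does not start with `t^{-u}` (relative to `x`), then
`x t^{2u} x⁻¹ g` starts with `t^{u}`. -/
lemma Qp_push (x : H) (u : ℤˣ) (g : HNNExtension H A B φ)
    (hno : ¬ Qp φ x (-u) g) :
    Qp φ x u (HNNExtension.of x * t ^ (u : ℤ) * t ^ (u : ℤ) *
      HNNExtension.of x⁻¹ * g) := by
  obtain ⟨w, hw⟩ := exists_reduced φ (HNNExtension.of x⁻¹ * g)
  rcases hl : w.toList with _ | ⟨⟨u₁, g₁⟩, rest⟩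
  · refine ⟨⟨x, [(u, 1), (u, w.head)], ?_⟩, ?_, by simp, by simp [one_mem]⟩
    · refine List.isChain_cons_cons.2 ⟨fun _ => rfl, List.isChain_singleton _⟩
    · have hg : HNNExtension.of w.head = HNNExtension.of x⁻¹ * g := by
        rw [← hw]
        simp [HNNExtension.NormalWord.ReducedWord.prod, hl]
      simp only [HNNExtension.NormalWord.ReducedWord.prod, List.map_cons, List.map_nil,
        List.prod_cons, List.prod_nil, map_one]
      rw [mul_one, map_inv] at *
      rw [hg]
      group
  · by_cases hcase : u₁ = -u ∧ x⁻¹ * (x * w.head) ∈ toSubgroup A B u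
    · exfalso
      apply hno
      refine ⟨⟨x * w.head, w.toList, w.chain⟩, ?_, ?_, ?_⟩
      · show HNNExtension.of (x * w.head) * _ = g
        have : g = HNNExtension.of x * w.prod φ := by
          rw [hw, ← mul_assoc, ← map_mul, mul_inv_cancel, map_one, one_mul]
        rw [this]
        simp only [HNNExtension.NormalWord.ReducedWord.prod, map_mul]
        group
      · rw [hl]
        simp [hcase.1]
      · rw [neg_neg]
        exact hcase.2
    · have hkey : w.head ∈ toSubgroup A B u → u = u₁ := by
        intro hmem
        rcases Int.units_eq_one_or u₁ with h1 | h1 <;>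
          rcases Int.units_eq_one_or u with h2 | h2 <;>
            simp_all [inv_mul_cancel_left]
      refine ⟨⟨x, (u, 1) :: (u, w.head) :: w.toList, ?_⟩, ?_, by simp, by simp [one_mem]⟩
    
      · refine List.isChain_cons_cons.2 ⟨fun _ => rfl, ?_⟩
        rw [hl]
        refine List.isChain_cons_cons.2 ⟨?_, ?_⟩
        · intro hmem
          exact hkey hmem
        · rw [← hl]; exact w.chain
      · simp only [HNNExtension.NormalWord.ReducedWord.prod, List.map_cons, List.prod_cons,
          map_one]
        have : w.prod φ = HNNExtension.of w.head *
            (w.toList.map (fun x => t ^ (x.1 : ℤ) * HNNExtension.of x.2)).prod := rfl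
        rw [← mul_assoc, mul_one]
        calc HNNExtension.of x * (t ^ (u:ℤ)) * ((t ^ (u:ℤ)) * HNNExtension.of w.head *
              (w.toList.map (fun x => t ^ (x.1 : ℤ) * HNNExtension.of x.2)).prod)
            = HNNExtension.of x * t ^ (u:ℤ) * t ^ (u:ℤ) * w.prod φ := by
              rw [this]; group
          _ = _ := by rw [hw]; group

end britton
end Stmt1Aux
namespace Stmt1Aux

section dir1
open HNNExtension
variable {H : Type*} [Group H] {A B : Subgroup H} (φ : A ≃* B)
variable {α : Type*} [Fintype α] [DecidableEq α]

lemma alpha_nonempty (η : α → HNNExtension H A B φ)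
    (hgen : Subgroup.closure (Set.range η) = ⊤) : Nonempty α := by
  rcases isEmpty_or_nonempty α with hα | hα
  · exfalso
    have h0 : Set.range η = ∅ := Set.range_eq_empty η
    rw [h0, Subgroup.closure_empty] at hgen
    have ht : (HNNExtension.t : HNNExtension H A B φ) ∈ (⊥ : Subgroup _) := by
      rw [hgen]; exact Subgroup.mem_top _
    rw [Subgroup.mem_bot] at ht
    have h1 : expSum φ (HNNExtension.t : HNNExtension H A B φ) = 1 := by rw [ht, map_one]
    rw [expSum_t] at h1
    exact absurd h1 (by decide)
  · exact hα

lemma exists_not_mem_union (hA : A ≠ ⊤) (hB : B ≠ ⊤) : ∃ c : H, c ∉ A ∧ c ∉ B := by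
  obtain ⟨a₀, ha₀⟩ : ∃ a₀, a₀ ∉ A := by
    by_contra hcon
    push_neg at hcon
    exact hA ((Subgroup.eq_top_iff' A).2 hcon)
  obtain ⟨b₀, hb₀⟩ : ∃ b₀, b₀ ∉ B := by
    by_contra hcon
    push_neg at hcon
    exact hB ((Subgroup.eq_top_iff' B).2 hcon)
  by_cases h1 : a₀ ∈ B
  · by_cases h2 : b₀ ∈ A
    · refine ⟨a₀ * b₀, fun hc => ?_, fun hc => ?_⟩
      · exact ha₀ ((Subgroup.mul_mem_cancel_right A h2).1 hc)
      · exact hb₀ ((Subgroup.mul_mem_cancel_left B h1).1 hc)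
    · exact ⟨b₀, h2, hb₀⟩
  · exact ⟨a₀, ha₀, h1⟩

/-- the negligible direction for HNN extensions with both subgroups proper. -/
lemma hnn_negligible (η : α → HNNExtension H A B φ) (inv : α → α)
    (hsym : IsSymmetricGen η inv) (hA : A ≠ ⊤) (hB : B ≠ ⊤) :
    StronglyNegligible {w : List α |
        evalWord η w ∈ (HNNExtension.of : H →* HNNExtension H A B φ).range} := by
  classical
  obtain ⟨hinv2, -, hinv, hgen⟩ := hsym
  haveI : Nonempty α := alpha_nonempty φ η hgen
  obtain ⟨c, hcA, hcB⟩ := exists_not_mem_union hA hB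
  set K := (HNNExtension.of : H →* HNNExtension H A B φ).range with hK
  set Y : H → ℤˣ → Set (HNNExtension H A B φ ⧸ K) :=
    fun x u => {v | ∃ g, QuotientGroup.mk g = v ∧ Qp φ x u g} with hY
  have hdj : ∀ (x x' : H) (u u' : ℤˣ),
      (u = u' → x⁻¹ * x' ∈ toSubgroup A B (-u) → False) →
      ∀ v, v ∈ Y x u → v ∈ Y x' u' → False := by
    rintro x x' u u' hcrit v ⟨g, hg, hQ⟩ ⟨g', hg', hQ'⟩
    have hgg : (QuotientGroup.mk g : HNNExtension H A B φ ⧸ K) = QuotientGroup.mk g' := by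
      rw [hg, hg']
    rw [QuotientGroup.eq] at hgg
    obtain ⟨h, hh⟩ := hgg
    have hg'' : g' = g * HNNExtension.of h := by
      rw [hh]; group
    rw [hg''] at hQ'
    obtain ⟨huu, hmem⟩ := Qp_unique φ h hQ hQ'
    exact hcrit huu hmem
  -- the push lemma at the quotient level
  have hpush : ∀ (x : H) (u : ℤˣ), ∀ v ∉ Y x (-u),
      ((HNNExtension.of x * t ^ (u:ℤ) * t ^ (u:ℤ) * HNNExtension.of x⁻¹ :
        HNNExtension H A B φ)) • v ∈ Y x u := by
    intro x u v hv
    obtain ⟨g, rfl⟩ := QuotientGroup.mk_surjective v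
    have hno : ¬ Qp φ x (-u) g := fun hq => hv ⟨g, rfl, hq⟩
    have hQ := Qp_push φ x u g hno
    refine ⟨HNNExtension.of x * t ^ (u:ℤ) * t ^ (u:ℤ) * HNNExtension.of x⁻¹ * g, ?_, hQ⟩
    rw [MulAction.Quotient.smul_mk, smul_eq_mul]
  set p : HNNExtension H A B φ :=
    HNNExtension.of (1:H) * t ^ ((1:ℤˣ):ℤ) * t ^ ((1:ℤˣ):ℤ) * HNNExtension.of (1:H)⁻¹ with hp
  set q : HNNExtension H A B φ :=
    HNNExtension.of c * t ^ ((1:ℤˣ):ℤ) * t ^ ((1:ℤˣ):ℤ) * HNNExtension.of c⁻¹ with hq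
  obtain ⟨wp, hwp⟩ := exists_word η inv hinv hgen p
  obtain ⟨wq, hwq⟩ := exists_word η inv hinv hgen q
  have key := negligible_of_schottky η inv hinv2 hinv
    (Y 1 1) (Y 1 (-1)) (Y c 1) (Y c (-1))
    (hdj 1 1 1 (-1) (by intro he; exact absurd he (by decide)))
    (hdj 1 c 1 1 (by
      intro _ hmem
      rw [inv_one, one_mul] at hmem
      exact hcB (by simpa using hmem)))
    (hdj 1 c 1 (-1) (by intro he; exact absurd he (by decide)))
    (hdj 1 c (-1) 1 (by intro he; exact absurd he (by decide)))
    (hdj 1 c (-1) (-1) (by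
      intro _ hmem
      rw [inv_one, one_mul] at hmem
      exact hcA (by simpa using hmem)))
    (hdj c c 1 (-1) (by intro he; exact absurd he (by decide)))
    p q
    (by
      intro v hv
      have := hpush 1 1 v (by simpa using hv)
      simpa [hp] using this)
    (by
      intro v hv
      have := hpush c 1 v (by simpa using hv)
      simpa [hq] using this)
    wp wq hwp hwq (QuotientGroup.mk 1)
  have hsets : {w : List α | evalWord η w ∈ K} =
      {w : List α | evalWord η w • (QuotientGroup.mk 1 : HNNExtension H A B φ ⧸ K) =
        QuotientGroup.mk 1} := by
    ext w
    simp only [Set.mem_setOf_eq]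
    rw [MulAction.Quotient.smul_mk, smul_eq_mul, mul_one, QuotientGroup.eq, mul_one,
      Subgroup.inv_mem_iff]
  rw [hK] at hsets
  rw [hsets]
  exact key

end dir1
end Stmt1Aux
namespace Stmt1Aux

lemma two_le_iff_ne_top {H : Type*} [Group H] (A : Subgroup H) :
    2 ≤ Cardinal.mk (H ⧸ A) ↔ A ≠ ⊤ := by
  rw [Cardinal.two_le_iff]
  constructor
  · rintro ⟨x, y, hxy⟩ rfl
    exact hxy (by
      induction x using QuotientGroup.induction_on
      induction y using QuotientGroup.induction_on
      exact QuotientGroup.eq.2 (Subgroup.mem_top _))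
  · intro hA
    obtain ⟨h, hh⟩ : ∃ h, h ∉ A := by
      by_contra hcon
      push_neg at hcon
      exact hA ((Subgroup.eq_top_iff' A).2 hcon)
    refine ⟨QuotientGroup.mk h, QuotientGroup.mk 1, fun he => hh ?_⟩
    have := QuotientGroup.eq.1 he
    rw [mul_one] at this
    exact (Subgroup.inv_mem_iff A).1 this

end Stmt1Aux

open Stmt1Aux in
theorem stmt_1 {H : Type*} [Group H] (A B : Subgroup H) (φ : A ≃* B)
    {α : Type*} [Fintype α] (η : α → HNNExtension H A B φ) (inv : α → α)
    (hsym : IsSymmetricGen η inv) :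
    StronglyNegligible {w : List α |
        evalWord η w ∈ (HNNExtension.of : H →* HNNExtension H A B φ).range} ↔
      (2 ≤ Cardinal.mk (H ⧸ A) ∧ 2 ≤ Cardinal.mk (H ⧸ B)) := by
  haveI : DecidableEq α := Classical.decEq α
  rw [two_le_iff_ne_top A, two_le_iff_ne_top B]
  constructor
  · intro hneg
    constructor
    · intro htop
      exact hnn_not_negligible φ η inv hsym (Or.inl htop) hneg
    · intro htop
      exact hnn_not_negligible φ η inv hsym (Or.inr htop) hneg
  · rintro ⟨hA, hB⟩
    exact hnn_negligible φ η inv hsym hA hB
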